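/- arXiv:1405.4718 — 5 statements merged into one kernel-verified Lean document; each statement's English description precedes it below -/
import Mathlib

section
/- Let λ/μ be a skew shape with n parts and ν/τ a skew shape with l parts (λ,μ,ν,τ weakly decreasing nonnegative integer vectors with λ ≥ μ and ν ≥ τ componentwise). Define the disjoint union (λ/μ) ∪ (ν/τ) as the skew shape (ν_1+λ_1,…,ν_1+λ_n, ν_1,…,ν_l)/(ν_1+μ_1,…,ν_1+μ_n, τ_1,…,τ_l), and similarly (ν/τ) ∪ (λ/μ) = (λ_1+ν_1,…,λ_1+ν_l, λ_1,…,λ_n)/(λ_1+τ_1,…,λ_1+τ_l, μ_1,…,μ_n). Then for every nonnegative integer weight vector w of total sum (|λ|−|μ|)+(|ν|−|τ|), the polytope P_{(λ/μ)∪(ν/τ),w} is integral if and only if P_{(ν/τ)∪(λ/μ),w} is integral. -/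
open Finset

/-- A real `(m+1) × n` array satisfying the Gelfand–Tsetlin inequalities:
rows increase upwards along columns, and down-right diagonals decrease.
Row `0` is the bottom row, row `m` the top row. -/
def IsGTPattern (m n : ℕ) (x : Fin (m + 1) → Fin n → ℝ) : Prop :=
  (∀ (i : Fin m) (j : Fin n), x i.castSucc j ≤ x i.succ j) ∧
  (∀ (i : Fin m) (j : Fin n) (h : (j : ℕ) + 1 < n),
    x i.succ ⟨(j : ℕ) + 1, h⟩ ≤ x i.castSucc j)

/-- The Gelfand–Tsetlin polytope `P_{λ/μ,w}`: row `0` is `μ`, row `m` is `λ`,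
and the weight vector `w` has `m` entries, prescribing the successive
differences of row sums. -/
def gtPolytope (m n : ℕ) (lam mu : Fin n → ℤ) (w : Fin m → ℤ) :
    Set (Fin (m + 1) → Fin n → ℝ) :=
  {x | IsGTPattern m n x ∧ (∀ j, x 0 j = (mu j : ℝ)) ∧
    (∀ j, x (Fin.last m) j = (lam j : ℝ)) ∧
    ∀ i : Fin m, (∑ j, x i.succ j) - (∑ j, x i.castSucc j) = (w i : ℝ)}

/-- A GT-polytope is integral if all of its extreme points have integer
entries. -/
def IsIntegralPolytope {m n : ℕ} (P : Set (Fin (m + 1) → Fin n → ℝ)) : Prop :=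
  ∀ x ∈ Set.extremePoints ℝ P, ∀ i j, ∃ z : ℤ, x i j = (z : ℝ)

/-! ### Auxiliary material -/

/-- The block-swap map: first `l` columns of the output are columns
`n, …, n+l-1` of the input shifted up by `a`; last `n` columns are columns
`0, …, n-1` shifted down by `b`. -/
def TMap (m n l : ℕ) (a b : ℤ) (x : Fin (m + 1) → Fin (n + l) → ℝ) :
    Fin (m + 1) → Fin (l + n) → ℝ :=
  fun i j =>
    if h : (j : ℕ) < l then x i ⟨n + (j : ℕ), by omega⟩ + (a : ℝ)
    else x i ⟨(j : ℕ) - l, by have := j.isLt; omega⟩ - (b : ℝ)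

lemma TMap_apply (m n l : ℕ) (a b : ℤ) (x : Fin (m + 1) → Fin (n + l) → ℝ)
    (i : Fin (m + 1)) (c : ℕ) (hc : c < l + n) :
    TMap m n l a b x i ⟨c, hc⟩ =
      if h : c < l then x i ⟨n + c, by omega⟩ + (a : ℝ)
      else x i ⟨c - l, by omega⟩ - (b : ℝ) := rfl

lemma TMap_TMap (m n l : ℕ) (a b : ℤ) (x : Fin (m + 1) → Fin (n + l) → ℝ) :
    TMap m l n b a (TMap m n l a b x) = x := by
  funext i j
  have hj := j.isLt
  rw [show j = (⟨(j : ℕ), j.isLt⟩ : Fin (n + l)) from rfl, TMap_apply]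
  by_cases h : (j : ℕ) < n
  · rw [dif_pos h, TMap_apply, dif_neg (by omega)]
    rw [show (⟨l + (j : ℕ) - l, by omega⟩ : Fin (n + l)) = ⟨(j : ℕ), j.isLt⟩ from
      Fin.ext (show l + (j : ℕ) - l = (j : ℕ) by omega)]
    ring
  · rw [dif_neg h, TMap_apply, dif_pos (by omega)]
    rw [show (⟨n + ((j : ℕ) - n), by omega⟩ : Fin (n + l)) = ⟨(j : ℕ), j.isLt⟩ from
      Fin.ext (show n + ((j : ℕ) - n) = (j : ℕ) by omega)]
    ring

lemma TMap_comb (m n l : ℕ) (a b : ℤ) (c d : ℝ) (h : c + d = 1)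
    (p q : Fin (m + 1) → Fin (n + l) → ℝ) :
    TMap m n l a b (c • p + d • q) =
      c • TMap m n l a b p + d • TMap m n l a b q := by
  funext i j
  simp only [TMap, Pi.add_apply, Pi.smul_apply, smul_eq_mul]
  split_ifs with h'
  · linear_combination (-(a : ℝ)) * h
  · linear_combination ((b : ℝ)) * h

lemma TMap_int (m n l : ℕ) (a b : ℤ) (x : Fin (m + 1) → Fin (n + l) → ℝ)
    (hx : ∀ i j, ∃ z : ℤ, x i j = (z : ℝ)) :
    ∀ i j, ∃ z : ℤ, TMap m n l a b x i j = (z : ℝ) := by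
  intro i j
  simp only [TMap]
  split_ifs with h
  · obtain ⟨z, hz⟩ := hx i ⟨n + (j : ℕ), by omega⟩
    exact ⟨z + a, by rw [hz]; push_cast; ring⟩
  · obtain ⟨z, hz⟩ := hx i ⟨(j : ℕ) - l, by have := j.isLt; omega⟩
    exact ⟨z - b, by rw [hz]; push_cast; ring⟩

/-- The block-swap map sends one union polytope into the other. -/
lemma TMap_mem (m n l : ℕ) (hn : 1 ≤ n) (hl : 1 ≤ l)
    (lam mu : Fin n → ℤ) (nu tau : Fin l → ℤ)
    (htau0 : ∀ j, 0 ≤ tau j)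
    (w : Fin m → ℤ)
    (x : Fin (m + 1) → Fin (n + l) → ℝ)
    (hx : x ∈ gtPolytope m (n + l)
        (Fin.append (fun i => nu ⟨0, hl⟩ + lam i) nu)
        (Fin.append (fun i => nu ⟨0, hl⟩ + mu i) tau) w) :
    TMap m n l (lam ⟨0, hn⟩) (nu ⟨0, hl⟩) x ∈ gtPolytope m (l + n)
        (Fin.append (fun i => lam ⟨0, hn⟩ + nu i) lam)
        (Fin.append (fun i => lam ⟨0, hn⟩ + tau i) mu) w := by
  obtain ⟨⟨hcol, hdiag⟩, hbot, htop, hwt⟩ := hx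
  set a := lam ⟨0, hn⟩ with ha
  set b := nu ⟨0, hl⟩ with hb
  have col' : ∀ (i : Fin m) (c : ℕ) (hc : c < n + l),
      x i.castSucc ⟨c, hc⟩ ≤ x i.succ ⟨c, hc⟩ := fun i c hc => hcol i ⟨c, hc⟩
  have diag' : ∀ (i : Fin m) (c c' : ℕ) (hc : c < n + l) (hc' : c' < n + l),
      c' = c + 1 → x i.succ ⟨c', hc'⟩ ≤ x i.castSucc ⟨c, hc⟩ := by
    intro i c c' hc hc' he
    subst he
    exact hdiag i ⟨c, hc⟩ hc'
  -- column monotonicity up to the top and down to the bottom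
  have le_top : ∀ (i : Fin (m + 1)) (j : Fin (n + l)), x i j ≤ x (Fin.last m) j := by
    intro i j
    induction i using Fin.reverseInduction with
    | last => exact le_refl _
    | cast i ih => exact (hcol i j).trans ih
  have ge_bot : ∀ (i : Fin (m + 1)) (j : Fin (n + l)), x 0 j ≤ x i j := by
    intro i j
    induction i using Fin.induction with
    | zero => exact le_refl _
    | succ i ih => exact ih.trans (hcol i j)
  -- evaluated boundary values
  have htop0 : x (Fin.last m) ⟨0, by omega⟩ = ((b : ℝ) + (a : ℝ)) := by
    have := htop (Fin.castAdd l ⟨0, hn⟩)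
    rw [Fin.append_left] at this
    rw [show (⟨0, by omega⟩ : Fin (n + l)) = Fin.castAdd l ⟨0, hn⟩ from Fin.ext rfl, this]
    push_cast
    ring
  have hbotlast : x 0 ⟨n + (l - 1), by omega⟩ = ((tau ⟨l - 1, by omega⟩ : ℤ) : ℝ) := by
    have := hbot (Fin.natAdd n ⟨l - 1, by omega⟩)
    rw [Fin.append_right] at this
    exact this
  -- the row-sum shift
  have rowsum : ∀ i : Fin (m + 1),
      ∑ j : Fin (l + n), TMap m n l a b x i j
        = (∑ j : Fin (n + l), x i j) + ((l : ℝ) * a - (n : ℝ) * b) := by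
    intro i
    rw [Fin.sum_univ_add (f := fun j : Fin (l + n) => TMap m n l a b x i j)]
    rw [Fin.sum_univ_add (f := fun j : Fin (n + l) => x i j)]
    have e1 : ∀ j : Fin l, TMap m n l a b x i (Fin.castAdd n j)
        = x i (Fin.natAdd n j) + (a : ℝ) := fun j => dif_pos j.isLt
    have e2 : ∀ j : Fin n, TMap m n l a b x i (Fin.natAdd l j)
        = x i (Fin.castAdd l j) - (b : ℝ) := by
      intro j
      have h1 : ¬ ((Fin.natAdd l j : Fin (l + n)) : ℕ) < l := by
        simp [Fin.natAdd]
      rw [show Fin.natAdd l j = (⟨l + (j : ℕ), by omega⟩ : Fin (l + n)) from rfl,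
        TMap_apply, dif_neg (by omega)]
      rw [show (⟨l + (j : ℕ) - l, by omega⟩ : Fin (n + l)) = Fin.castAdd l j from
        Fin.ext (show l + (j : ℕ) - l = (j : ℕ) by omega)]
    rw [Finset.sum_congr rfl (fun j _ => e1 j), Finset.sum_congr rfl (fun j _ => e2 j)]
    rw [Finset.sum_add_distrib, Finset.sum_sub_distrib]
    simp [Finset.card_univ, mul_comm]
    ring
  refine ⟨⟨?_, ?_⟩, ?_, ?_, ?_⟩
  · -- columns increase
    intro i j
    have hj := j.isLt
    rw [show j = (⟨(j : ℕ), j.isLt⟩ : Fin (l + n)) from rfl, TMap_apply, TMap_apply]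
    split_ifs with h
    · exact add_le_add (col' i (n + (j : ℕ)) (by omega)) le_rfl
    · exact sub_le_sub_right (col' i ((j : ℕ) - l) (by omega)) _
  · -- diagonals decrease
    intro i j h
    have hj := j.isLt
    rw [TMap_apply]
    have hR : TMap m n l a b x i.castSucc j =
        if h2 : (j : ℕ) < l then x i.castSucc ⟨n + (j : ℕ), by omega⟩ + (a : ℝ)
        else x i.castSucc ⟨(j : ℕ) - l, by omega⟩ - (b : ℝ) := rfl
    rw [hR]
    by_cases h1 : (j : ℕ) + 1 < l
    · rw [dif_pos h1, dif_pos (by omega)]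
      exact add_le_add
        (diag' i (n + (j : ℕ)) (n + ((j : ℕ) + 1)) (by omega) (by omega) (by omega)) le_rfl
    · by_cases h2 : (j : ℕ) < l
      · -- cross case: j = l - 1
        rw [dif_neg h1, dif_pos h2]
        have A : x i.succ ⟨(j : ℕ) + 1 - l, by omega⟩ = x i.succ ⟨0, by omega⟩ := by
          rw [show (⟨(j : ℕ) + 1 - l, by omega⟩ : Fin (n + l)) = ⟨0, by omega⟩ from
            Fin.ext (show (j : ℕ) + 1 - l = 0 by omega)]
        have B := le_top i.succ ⟨0, by omega⟩
        have C := ge_bot i.castSucc ⟨n + (l - 1), by omega⟩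
        have D : x i.castSucc ⟨n + (j : ℕ), by omega⟩
            = x i.castSucc ⟨n + (l - 1), by omega⟩ := by
          rw [show (⟨n + (j : ℕ), by omega⟩ : Fin (n + l)) = ⟨n + (l - 1), by omega⟩ from
            Fin.ext (show n + (j : ℕ) = n + (l - 1) by omega)]
        have E : (0 : ℝ) ≤ ((tau ⟨l - 1, by omega⟩ : ℤ) : ℝ) := by
          exact_mod_cast htau0 _
        rw [A, D]
        rw [htop0] at B
        rw [hbotlast] at C
        linarith
      · -- both in second block
        rw [dif_neg h1, dif_neg h2]
        exact sub_le_sub_right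
          (diag' i ((j : ℕ) - l) ((j : ℕ) + 1 - l) (by omega) (by omega) (by omega)) _
  · -- bottom row
    intro j
    induction j using Fin.addCases with
    | left j =>
        rw [Fin.append_left]
        have : TMap m n l a b x 0 (Fin.castAdd n j) = x 0 (Fin.natAdd n j) + (a : ℝ) :=
          dif_pos j.isLt
        rw [this, hbot, Fin.append_right]
        push_cast
        ring
    | right j =>
        rw [Fin.append_right]
        rw [show Fin.natAdd l j = (⟨l + (j : ℕ), by omega⟩ : Fin (l + n)) from rfl,
          TMap_apply, dif_neg (by omega)]
        rw [show (⟨l + (j : ℕ) - l, by omega⟩ : Fin (n + l)) = Fin.castAdd l j from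
          Fin.ext (show l + (j : ℕ) - l = (j : ℕ) by omega)]
        rw [hbot, Fin.append_left]
        push_cast
        ring
  · -- top row
    intro j
    induction j using Fin.addCases with
    | left j =>
        rw [Fin.append_left]
        have : TMap m n l a b x (Fin.last m) (Fin.castAdd n j)
            = x (Fin.last m) (Fin.natAdd n j) + (a : ℝ) := dif_pos j.isLt
        rw [this, htop, Fin.append_right]
        push_cast
        ring
    | right j =>
        rw [Fin.append_right]
        rw [show Fin.natAdd l j = (⟨l + (j : ℕ), by omega⟩ : Fin (l + n)) from rfl,
          TMap_apply, dif_neg (by omega)]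
        rw [show (⟨l + (j : ℕ) - l, by omega⟩ : Fin (n + l)) = Fin.castAdd l j from
          Fin.ext (show l + (j : ℕ) - l = (j : ℕ) by omega)]
        rw [htop, Fin.append_left]
        push_cast
        ring
  · -- weights
    intro i
    rw [rowsum, rowsum]
    have := hwt i
    linarith

/-- Transfer of extreme points along a pair of mutually inverse
affine-combination-preserving maps. -/
lemma extreme_map {E F : Type*} [AddCommGroup E] [Module ℝ E] [AddCommGroup F] [Module ℝ F]
    (f : E → F) (g : F → E) (P : Set E) (Q : Set F)
    (hfP : ∀ x ∈ P, f x ∈ Q) (hgQ : ∀ y ∈ Q, g y ∈ P)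
    (hgf : ∀ x ∈ P, g (f x) = x) (hfg : ∀ y ∈ Q, f (g y) = y)
    (hg : ∀ (c d : ℝ), c + d = 1 → ∀ p q, g (c • p + d • q) = c • g p + d • g q)
    {x : E} (hx : x ∈ Set.extremePoints ℝ P) : f x ∈ Set.extremePoints ℝ Q := by
  rw [mem_extremePoints] at hx ⊢
  obtain ⟨hxP, hext⟩ := hx
  refine ⟨hfP x hxP, ?_⟩
  intro y hy z hz hseg
  obtain ⟨c, d, hc, hd, hcd, he⟩ := hseg
  have hx' : c • g y + d • g z = x := by
    rw [← hg c d hcd, he, hgf x hxP]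
  have h2 := hext (g y) (hgQ y hy) (g z) (hgQ z hz) ⟨c, d, hc, hd, hcd, hx'⟩
  constructor
  · rw [← hfg y hy, h2.1]
  · rw [← hfg z hz, h2.2]

/-- One direction of the main theorem, stated symmetrically. -/
lemma main_dir (n l : ℕ) (hn : 1 ≤ n) (hl : 1 ≤ l)
    (lam mu : Fin n → ℤ) (nu tau : Fin l → ℤ)
    (hmu0 : ∀ j, 0 ≤ mu j) (htau0 : ∀ j, 0 ≤ tau j)
    (m : ℕ) (w : Fin m → ℤ)
    (h2 : IsIntegralPolytope (gtPolytope m (l + n)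
        (Fin.append (fun i => lam ⟨0, hn⟩ + nu i) lam)
        (Fin.append (fun i => lam ⟨0, hn⟩ + tau i) mu) w)) :
    IsIntegralPolytope (gtPolytope m (n + l)
        (Fin.append (fun i => nu ⟨0, hl⟩ + lam i) nu)
        (Fin.append (fun i => nu ⟨0, hl⟩ + mu i) tau) w) := by
  intro x hx i j
  set P := gtPolytope m (n + l)
      (Fin.append (fun i => nu ⟨0, hl⟩ + lam i) nu)
      (Fin.append (fun i => nu ⟨0, hl⟩ + mu i) tau) w
  set Q := gtPolytope m (l + n)
      (Fin.append (fun i => lam ⟨0, hn⟩ + nu i) lam)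
      (Fin.append (fun i => lam ⟨0, hn⟩ + tau i) mu) w
  have hfP : ∀ y ∈ P, TMap m n l (lam ⟨0, hn⟩) (nu ⟨0, hl⟩) y ∈ Q :=
    fun y hy => TMap_mem m n l hn hl lam mu nu tau htau0 w y hy
  have hgQ : ∀ y ∈ Q, TMap m l n (nu ⟨0, hl⟩) (lam ⟨0, hn⟩) y ∈ P :=
    fun y hy => TMap_mem m l n hl hn nu tau lam mu hmu0 w y hy
  have hext : TMap m n l (lam ⟨0, hn⟩) (nu ⟨0, hl⟩) x ∈ Set.extremePoints ℝ Q := by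
    apply extreme_map _ (TMap m l n (nu ⟨0, hl⟩) (lam ⟨0, hn⟩)) P Q hfP hgQ
      (fun y _ => TMap_TMap m n l _ _ y) (fun y _ => TMap_TMap m l n _ _ y)
      (fun c d hcd p q => TMap_comb m l n _ _ c d hcd p q) hx
  have hint := h2 _ hext
  have : x = TMap m l n (nu ⟨0, hl⟩) (lam ⟨0, hn⟩)
      (TMap m n l (lam ⟨0, hn⟩) (nu ⟨0, hl⟩) x) := (TMap_TMap m n l _ _ x).symm
  rw [this]
  exact TMap_int m l n _ _ _ hint i j

/-- The GT-polytope of the disjoint union `(λ/μ) ∪ (ν/τ)` is integral if and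
only if that of `(ν/τ) ∪ (λ/μ)` is integral, for every weight `w`. -/
theorem statement9 (n l : ℕ) (hn : 1 ≤ n) (hl : 1 ≤ l)
    (lam mu : Fin n → ℤ) (nu tau : Fin l → ℤ)
    (hlam : Antitone lam) (hmu : Antitone mu) (hnu : Antitone nu) (htau : Antitone tau)
    (hmu0 : ∀ j, 0 ≤ mu j) (htau0 : ∀ j, 0 ≤ tau j)
    (hge1 : ∀ j, mu j ≤ lam j) (hge2 : ∀ j, tau j ≤ nu j)
    (m : ℕ) (w : Fin m → ℤ) (hw : ∀ i, 0 ≤ w i)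
    (hsum : ∑ i, w i =
      (∑ j, lam j - ∑ j, mu j) + (∑ j, nu j - ∑ j, tau j)) :
    IsIntegralPolytope (gtPolytope m (n + l)
        (Fin.append (fun i => nu ⟨0, hl⟩ + lam i) nu)
        (Fin.append (fun i => nu ⟨0, hl⟩ + mu i) tau) w) ↔
    IsIntegralPolytope (gtPolytope m (l + n)
        (Fin.append (fun i => lam ⟨0, hn⟩ + nu i) lam)
        (Fin.append (fun i => lam ⟨0, hn⟩ + tau i) mu) w) := by
  constructor
  · intro h
    exact main_dir l n hl hn nu tau lam mu htau0 hmu0 m w h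
  · intro h
    exact main_dir n l hn hl lam mu nu tau hmu0 htau0 m w h
end

section
/- For every integer r ≥ 4, let λ = (3,2,1,1,…,1) ∈ ℤ^r and μ = (2,1,0,…,0) ∈ ℤ^r (so the skew shape λ/μ has exactly r boxes). Then the Gelfand–Tsetlin polytope P_{λ/μ,1} with weight 1 = (1,…,1) of length r has an extreme point with a non-integer entry. -/
open Finset

noncomputable def Xc (i j : ℕ) : ℝ :=
  if j = 0 then (if i ≤ 2 then 2 else if i = 3 then 5/2 else 3)
  else if j = 1 then (if i = 0 then 1 else if i = 1 then 3/2 else 2)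
  else if j = 2 then (if i = 0 then 0 else if i ≤ 2 then 1/2 else 1)
  else if j = 3 then (if i ≤ 1 then 0 else if i ≤ 3 then 1/2 else 1)
  else (if i ≤ j then 0 else 1)

lemma Xc_mono (i j : ℕ) : Xc i j ≤ Xc (i+1) j := by
  unfold Xc; split_ifs <;> first | contradiction | omega | norm_num

set_option maxHeartbeats 1000000 in
lemma Xc_diag (i j : ℕ) : Xc (i+1) (j+1) ≤ Xc i j := by
  rcases j with _|_|_|j <;>
    (norm_num [Xc]; split_ifs <;> first | contradiction | omega | norm_num)

lemma combo {a b u1 v1 u2 v2 : ℝ} (ha : 0 < a) (hb : 0 < b)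
    (h1 : u1 ≤ v1) (h2 : u2 ≤ v2) (h : a*u1 + b*u2 = a*v1 + b*v2) :
    u1 = v1 ∧ u2 = v2 := by
  constructor <;> nlinarith

lemma sum_pair_support {r : ℕ} (f : Fin r → ℝ) (a b : Fin r) (hab : a ≠ b)
    (h : ∀ j, j ≠ a → j ≠ b → f j = 0) : ∑ j, f j = f a + f b := by
  rw [← Finset.sum_pair hab]
  refine (Finset.sum_subset (Finset.subset_univ _) ?_).symm
  intro x _ hx
  simp only [Finset.mem_insert, Finset.mem_singleton, not_or] at hx
  exact h x hx.1 hx.2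

lemma sum_single_support {r : ℕ} (f : Fin r → ℝ) (a : Fin r)
    (h : ∀ j, j ≠ a → f j = 0) : ∑ j, f j = f a :=
  Finset.sum_eq_single a (fun b _ hb => h b hb) (by simp)


lemma sum_four {r : ℕ} (hr : 4 ≤ r) (f : Fin r → ℝ)
    (h : ∀ j : Fin r, 4 ≤ (j : ℕ) → f j = 0) :
    ∑ j, f j = f ⟨0, by omega⟩ + f ⟨1, by omega⟩ + f ⟨2, by omega⟩ + f ⟨3, by omega⟩ := by
  have hs : ∑ j, f j = ∑ j ∈ ({⟨0, by omega⟩, ⟨1, by omega⟩, ⟨2, by omega⟩, ⟨3, by omega⟩} :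
      Finset (Fin r)), f j := by
    refine (Finset.sum_subset (Finset.subset_univ _) ?_).symm
    intro x _ hx
    simp only [Finset.mem_insert, Finset.mem_singleton, not_or, Fin.ext_iff] at hx
    exact h x (by omega)
  rw [hs]
  rw [Finset.sum_insert (by simp [Fin.ext_iff]), Finset.sum_insert (by simp [Fin.ext_iff]),
    Finset.sum_insert (by simp [Fin.ext_iff]), Finset.sum_singleton]
  ring


lemma X00 {i : ℕ} (h : i ≤ 2) : Xc i 0 = 2 := by
  unfold Xc; split_ifs <;> first | contradiction | omega | norm_num
lemma X0m : Xc 3 0 = 5/2 := by norm_num [Xc]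
lemma X0h {i : ℕ} (h : 4 ≤ i) : Xc i 0 = 3 := by
  unfold Xc; split_ifs <;> first | contradiction | omega | norm_num
lemma X1l : Xc 0 1 = 1 := by norm_num [Xc]
lemma X1m : Xc 1 1 = 3/2 := by norm_num [Xc]
lemma X1h {i : ℕ} (h : 2 ≤ i) : Xc i 1 = 2 := by
  unfold Xc; split_ifs <;> first | contradiction | omega | norm_num
lemma X2l : Xc 0 2 = 0 := by norm_num [Xc]
lemma X2m {i : ℕ} (h1 : 1 ≤ i) (h2 : i ≤ 2) : Xc i 2 = 1/2 := by
  unfold Xc; split_ifs <;> first | contradiction | omega | norm_num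
lemma X2h {i : ℕ} (h : 3 ≤ i) : Xc i 2 = 1 := by
  unfold Xc; split_ifs <;> first | contradiction | omega | norm_num
lemma X3l {i : ℕ} (h : i ≤ 1) : Xc i 3 = 0 := by
  unfold Xc; split_ifs <;> first | contradiction | omega | norm_num
lemma X3m {i : ℕ} (h1 : 2 ≤ i) (h2 : i ≤ 3) : Xc i 3 = 1/2 := by
  unfold Xc; split_ifs <;> first | contradiction | omega | norm_num
lemma X3h {i : ℕ} (h : 4 ≤ i) : Xc i 3 = 1 := by
  unfold Xc; split_ifs <;> first | contradiction | omega | norm_num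
lemma XB0 {i j : ℕ} (h4 : 4 ≤ j) (h : i ≤ j) : Xc i j = 0 := by
  unfold Xc; split_ifs <;> first | contradiction | omega | norm_num
lemma XB1 {i j : ℕ} (h4 : 4 ≤ j) (h : j < i) : Xc i j = 1 := by
  unfold Xc; split_ifs <;> first | contradiction | omega | norm_num

set_option maxHeartbeats 2000000 in
lemma uniq (r : ℕ) (hr : 4 ≤ r) (y : Fin (r+1) → Fin r → ℝ)
    (hy : y ∈ gtPolytope r r
        (fun i : Fin r => if (i : ℕ) = 0 then 3 else if (i : ℕ) = 1 then 2 else 1)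
        (fun i : Fin r => if (i : ℕ) = 0 then 2 else if (i : ℕ) = 1 then 1 else 0)
        (fun _ => 1))
    (hV : ∀ (i j : ℕ) (hi : i < r) (hj : j < r), Xc i j = Xc (i+1) j →
        y ⟨i, by omega⟩ ⟨j, hj⟩ = y ⟨i+1, by omega⟩ ⟨j, hj⟩)
    (hD : y ⟨1, by omega⟩ ⟨2, by omega⟩ = y ⟨2, by omega⟩ ⟨3, by omega⟩) :
    ∀ (i : Fin (r+1)) (j : Fin r), y i j = Xc i j := by
  obtain ⟨⟨hmono, hdiag⟩, h0, hlast, hsum⟩ := hy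
  have h0' : ∀ (j : ℕ) (hj : j < r), y ⟨0, by omega⟩ ⟨j, hj⟩ =
      if j = 0 then (2:ℝ) else if j = 1 then 1 else 0 := by
    intro j hj
    have h := h0 ⟨j, hj⟩
    simp only [Fin.val_mk] at h
    rw [show ((0 : Fin (r+1))) = ⟨0, by omega⟩ from rfl] at h
    rw [h]; split_ifs <;> norm_num
  have hlast' : ∀ (j : ℕ) (hj : j < r), y ⟨r, by omega⟩ ⟨j, hj⟩ =
      if j = 0 then (3:ℝ) else if j = 1 then 2 else 1 := by
    intro j hj
    have h := hlast ⟨j, hj⟩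
    simp only [Fin.val_mk] at h
    rw [show (Fin.last r) = ⟨r, by omega⟩ from rfl] at h
    rw [h]; split_ifs <;> norm_num
  -- chain lemma
  have chain : ∀ (j : ℕ) (hj : j < r) (a b : ℕ) (hab : a ≤ b) (hb : b ≤ r),
      (∀ k, a ≤ k → k < b → Xc k j = Xc (k+1) j) →
      y ⟨a, by omega⟩ ⟨j, hj⟩ = y ⟨b, by omega⟩ ⟨j, hj⟩ := by
    intro j hj a b
    induction b with
    | zero =>
      intro hab _ _
      have : a = 0 := by omega
      subst this; rfl
    | succ b ih =>
      intro hab hb ht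
      rcases Nat.lt_or_ge a (b+1) with h | h
      · have step : y ⟨b, by omega⟩ ⟨j, hj⟩ = y ⟨b+1, by omega⟩ ⟨j, hj⟩ :=
          hV b j (by omega) hj (ht b (by omega) (by omega))
        exact (ih (by omega) (by omega) (fun k hk1 hk2 => ht k hk1 (by omega))).trans step
      · have : a = b+1 := by omega
        subst this; rfl
  -- column facts
  have colBig0 : ∀ (j : ℕ) (hj : j < r), ∀ h4 : 4 ≤ j, ∀ i, ∀ hij : i ≤ j,
      y ⟨i, by omega⟩ ⟨j, hj⟩ = 0 := by
    intro j hj h4 i hij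
    have hc := chain j hj 0 i (by omega) (by omega) (fun k _ hk => by
      rw [XB0 h4 (by omega), XB0 h4 (by omega)])
    rw [← hc, h0' j hj, if_neg (by omega), if_neg (by omega)]
  have colBig1 : ∀ (j : ℕ) (hj : j < r), ∀ h4 : 4 ≤ j, ∀ i, ∀ hij : j < i, ∀ hi : i ≤ r,
      y ⟨i, by omega⟩ ⟨j, hj⟩ = 1 := by
    intro j hj h4 i hij hi
    have hc := chain j hj i r (by omega) le_rfl (fun k hk1 _ => by
      rw [XB1 h4 (by omega), XB1 h4 (by omega)])
    rw [hc, hlast' j hj, if_neg (by omega), if_neg (by omega)]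
  have c0low : ∀ i, ∀ hi2 : i ≤ 2, y ⟨i, by omega⟩ ⟨0, by omega⟩ = 2 := by
    intro i hi
    have hc := chain 0 (by omega) 0 i (by omega) (by omega) (fun k _ hk => by
      rw [X00 (by omega), X00 (by omega)])
    rw [← hc, h0' 0 (by omega), if_pos rfl]
  have c0high : ∀ i, ∀ h4 : 4 ≤ i, ∀ hi : i ≤ r, y ⟨i, by omega⟩ ⟨0, by omega⟩ = 3 := by
    intro i h4 hi
    have hc := chain 0 (by omega) i r (by omega) le_rfl (fun k hk1 _ => by
      rw [X0h (by omega), X0h (by omega)])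
    rw [hc, hlast' 0 (by omega), if_pos rfl]
  have c1high : ∀ i, ∀ h2 : 2 ≤ i, ∀ hi : i ≤ r, y ⟨i, by omega⟩ ⟨1, by omega⟩ = 2 := by
    intro i h2 hi
    have hc := chain 1 (by omega) i r (by omega) le_rfl (fun k hk1 _ => by
      rw [X1h (by omega), X1h (by omega)])
    rw [hc, hlast' 1 (by omega), if_neg (by omega), if_pos rfl]
  have c2high : ∀ i, ∀ h3 : 3 ≤ i, ∀ hi : i ≤ r, y ⟨i, by omega⟩ ⟨2, by omega⟩ = 1 := by
    intro i h3 hi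
    have hc := chain 2 (by omega) i r (by omega) le_rfl (fun k hk1 _ => by
      rw [X2h (by omega), X2h (by omega)])
    rw [hc, hlast' 2 (by omega), if_neg (by omega), if_neg (by omega)]
  have c3high : ∀ i, ∀ h4 : 4 ≤ i, ∀ hi : i ≤ r, y ⟨i, by omega⟩ ⟨3, by omega⟩ = 1 := by
    intro i h4 hi
    have hc := chain 3 (by omega) i r (by omega) le_rfl (fun k hk1 _ => by
      rw [X3h (by omega), X3h (by omega)])
    rw [hc, hlast' 3 (by omega), if_neg (by omega), if_neg (by omega)]
  have c3low0 : y ⟨0, by omega⟩ ⟨3, by omega⟩ = 0 := by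
    rw [h0' 3 (by omega), if_neg (by omega), if_neg (by omega)]
  have c3low1 : y ⟨1, by omega⟩ ⟨3, by omega⟩ = 0 := by
    rw [← hV 0 3 (by omega) (by omega) (by rw [X3l (by omega), X3l (by omega)]), c3low0]
  have c22 : y ⟨1, by omega⟩ ⟨2, by omega⟩ = y ⟨2, by omega⟩ ⟨2, by omega⟩ :=
    hV 1 2 (by omega) (by omega) (by rw [X2m (by omega) (by omega), X2m (by omega) (by omega)])
  have c33 : y ⟨2, by omega⟩ ⟨3, by omega⟩ = y ⟨3, by omega⟩ ⟨3, by omega⟩ :=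
    hV 2 3 (by omega) (by omega) (by rw [X3m (by omega) (by omega), X3m (by omega) (by omega)])
  -- row sums
  have rowsum : ∀ (i : ℕ) (hi : i ≤ r), ∑ j, y ⟨i, by omega⟩ j = 3 + i := by
    intro i
    induction i with
    | zero =>
      intro _
      rw [sum_four hr _ (fun j h4 => by
        obtain ⟨j, hj⟩ := j
        rw [h0' j hj, if_neg (by simp at h4; omega), if_neg (by simp at h4; omega)])]
      rw [h0' 0 (by omega), h0' 1 (by omega), h0' 2 (by omega), h0' 3 (by omega)]
      norm_num
    | succ i ih =>
      intro hi
      have hs := hsum ⟨i, by omega⟩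
      rw [show (⟨i, by omega⟩ : Fin r).succ = ⟨i+1, by omega⟩ from rfl,
        show (⟨i, by omega⟩ : Fin r).castSucc = ⟨i, by omega⟩ from rfl] at hs
      rw [ih (by omega)] at hs
      push_cast at hs ⊢
      linarith
  -- solve row 2
  have row2 := rowsum 2 (by omega)
  rw [sum_four hr _ (fun j h4 => by
    obtain ⟨j, hj⟩ := j
    exact colBig0 j hj (by simpa using h4) 2 (by simp at h4; omega))] at row2
  rw [c0low 2 (by omega), c1high 2 (by omega) (by omega), ← c22] at row2
  rw [hD] at row2
  have y23 : y ⟨2, by omega⟩ ⟨3, by omega⟩ = 1/2 := by push_cast at row2; linarith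
  have y12 : y ⟨1, by omega⟩ ⟨2, by omega⟩ = 1/2 := by rw [hD]; exact y23
  have y22 : y ⟨2, by omega⟩ ⟨2, by omega⟩ = 1/2 := by rw [← c22]; exact y12
  have y33 : y ⟨3, by omega⟩ ⟨3, by omega⟩ = 1/2 := by rw [← c33]; exact y23
  -- row 1
  have row1 := rowsum 1 (by omega)
  rw [sum_four hr _ (fun j h4 => by
    obtain ⟨j, hj⟩ := j
    exact colBig0 j hj (by simpa using h4) 1 (by simp at h4; omega))] at row1
  rw [c0low 1 (by omega), y12, c3low1] at row1
  have y11 : y ⟨1, by omega⟩ ⟨1, by omega⟩ = 3/2 := by push_cast at row1; linarith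
  -- row 3
  have row3 := rowsum 3 (by omega)
  rw [sum_four hr _ (fun j h4 => by
    obtain ⟨j, hj⟩ := j
    exact colBig0 j hj (by simpa using h4) 3 (by simp at h4; omega))] at row3
  rw [c1high 3 (by omega) (by omega), c2high 3 (by omega) (by omega), y33] at row3
  have y30 : y ⟨3, by omega⟩ ⟨0, by omega⟩ = 5/2 := by push_cast at row3; linarith
  -- final case analysis
  rintro ⟨i, hi⟩ ⟨j, hj⟩
  show y ⟨i, hi⟩ ⟨j, hj⟩ = Xc i j
  by_cases hj0 : j = 0
  · subst hj0
    rcases Nat.lt_or_ge i 3 with h3 | h3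
    · rw [c0low i (by omega), X00 (by omega)]
    rcases Nat.lt_or_ge i 4 with h4 | h4
    · have : i = 3 := by omega
      subst this
      rw [y30, X0m]
    · rw [c0high i (by omega) (by omega), X0h (by omega)]
  by_cases hj1 : j = 1
  · subst hj1
    rcases Nat.lt_or_ge i 1 with h1 | h1
    · have : i = 0 := by omega
      subst this
      rw [h0' 1 hj, X1l]; norm_num
    rcases Nat.lt_or_ge i 2 with h2 | h2
    · have : i = 1 := by omega
      subst this
      rw [y11, X1m]
    · rw [c1high i (by omega) (by omega), X1h (by omega)]
  by_cases hj2 : j = 2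
  · subst hj2
    rcases Nat.lt_or_ge i 1 with h1 | h1
    · have : i = 0 := by omega
      subst this
      rw [h0' 2 hj, X2l]; norm_num
    rcases Nat.lt_or_ge i 3 with h2 | h2
    · have heq : y ⟨i, hi⟩ ⟨2, hj⟩ = 1/2 := by
        rcases Nat.lt_or_ge i 2 with h | h
        · have : i = 1 := by omega
          subst this; exact y12
        · have : i = 2 := by omega
          subst this; exact y22
      rw [heq, X2m (by omega) (by omega)]
    · rw [c2high i (by omega) (by omega), X2h (by omega)]
  by_cases hj3 : j = 3
  · subst hj3
    rcases Nat.lt_or_ge i 2 with h1 | h1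
    · have heq : y ⟨i, hi⟩ ⟨3, hj⟩ = 0 := by
        rcases Nat.lt_or_ge i 1 with h | h
        · have : i = 0 := by omega
          subst this; exact c3low0
        · have : i = 1 := by omega
          subst this; exact c3low1
      rw [heq, X3l (by omega)]
    rcases Nat.lt_or_ge i 4 with h2 | h2
    · have heq : y ⟨i, hi⟩ ⟨3, hj⟩ = 1/2 := by
        rcases Nat.lt_or_ge i 3 with h | h
        · have : i = 2 := by omega
          subst this; exact y23
        · have : i = 3 := by omega
          subst this; exact y33
      rw [heq, X3m (by omega) (by omega)]
    · rw [c3high i (by omega) (by omega), X3h (by omega)]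
  · have h4 : 4 ≤ j := by omega
    rcases Nat.lt_or_ge j i with h | h
    · rw [colBig1 j hj h4 i h (by omega), XB1 h4 (by omega)]
    · rw [colBig0 j hj h4 i (by omega), XB0 h4 (by omega)]


set_option maxHeartbeats 2000000 in
/-- For every `r ≥ 4`, the skew shape `λ/μ` with `λ = (3,2,1,…,1) ∈ ℤ^r` and
`μ = (2,1,0,…,0) ∈ ℤ^r` (which has `r` boxes) gives a GT-polytope with weight
`1 = (1,…,1)` of length `r` having an extreme point with a non-integer
entry. -/
theorem statement11 (r : ℕ) (hr : 4 ≤ r) :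
    ∃ x ∈ Set.extremePoints ℝ (gtPolytope r r
        (fun i : Fin r => if (i : ℕ) = 0 then 3 else if (i : ℕ) = 1 then 2 else 1)
        (fun i : Fin r => if (i : ℕ) = 0 then 2 else if (i : ℕ) = 1 then 1 else 0)
        fun _ => 1),
      ∃ i j, ∀ z : ℤ, x i j ≠ (z : ℝ) := by
  have hmem : (fun (i : Fin (r+1)) (j : Fin r) => Xc i j) ∈ gtPolytope r r
      (fun i : Fin r => if (i : ℕ) = 0 then 3 else if (i : ℕ) = 1 then 2 else 1)
      (fun i : Fin r => if (i : ℕ) = 0 then 2 else if (i : ℕ) = 1 then 1 else 0)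
      (fun _ => 1) := by
    refine ⟨⟨?_, ?_⟩, ?_, ?_, ?_⟩
    · intro i j
      simp only [Fin.coe_castSucc, Fin.val_succ]
      exact Xc_mono _ _
    · intro i j h
      simp only [Fin.coe_castSucc, Fin.val_succ, Fin.val_mk]
      exact Xc_diag _ _
    · rintro ⟨j, hj⟩
      simp only [Fin.val_zero, Fin.val_mk]
      by_cases h0 : j = 0
      · subst h0; rw [X00 (by omega)]; norm_num
      by_cases h1 : j = 1
      · subst h1; rw [X1l]; norm_num
      by_cases h2 : j = 2
      · subst h2; rw [X2l]; norm_num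
      by_cases h3 : j = 3
      · subst h3; rw [X3l (by omega)]; norm_num
      · rw [XB0 (by omega) (by omega), if_neg h0, if_neg h1]; norm_num
    · rintro ⟨j, hj⟩
      simp only [Fin.val_last, Fin.val_mk]
      by_cases h0 : j = 0
      · subst h0; rw [X0h (by omega)]; norm_num
      by_cases h1 : j = 1
      · subst h1; rw [X1h (by omega)]; norm_num
      by_cases h2 : j = 2
      · subst h2; rw [X2h (by omega)]; norm_num
      by_cases h3 : j = 3
      · subst h3; rw [X3h (by omega)]; norm_num
      · rw [XB1 (by omega) (by omega), if_neg h0, if_neg h1]; norm_num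
    · rintro ⟨i, hi⟩
      simp only [Fin.succ_mk, Fin.castSucc_mk, Fin.val_mk]
      rw [← Finset.sum_sub_distrib]
      by_cases h0 : i = 0
      · subst h0
        rw [sum_pair_support _ ⟨1, by omega⟩ ⟨2, by omega⟩ (by simp [Fin.ext_iff])
            (fun j hj1 hj2 => by
          obtain ⟨j, hj⟩ := j
          simp only [ne_eq, Fin.mk.injEq] at hj1 hj2
          simp only [Fin.val_mk]
          by_cases h0 : j = 0
          · subst h0; rw [X00 (by omega), X00 (by omega)]; ring
          by_cases h3 : j = 3
          · subst h3; rw [X3l (by omega), X3l (by omega)]; ring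
          · rw [XB0 (by omega) (by omega), XB0 (by omega) (by omega)]; ring)]
        simp only [Fin.val_mk]
        rw [X1m, X1l, X2m (by omega) (by omega), X2l]
        norm_num
      by_cases h1 : i = 1
      · subst h1
        rw [sum_pair_support _ ⟨1, by omega⟩ ⟨3, by omega⟩ (by simp [Fin.ext_iff])
            (fun j hj1 hj2 => by
          obtain ⟨j, hj⟩ := j
          simp only [ne_eq, Fin.mk.injEq] at hj1 hj2
          simp only [Fin.val_mk]
          by_cases h0 : j = 0
          · subst h0; rw [X00 (by omega), X00 (by omega)]; ring
          by_cases h2 : j = 2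
          · subst h2; rw [X2m (by omega) (by omega), X2m (by omega) (by omega)]; ring
          · rw [XB0 (by omega) (by omega), XB0 (by omega) (by omega)]; ring)]
        simp only [Fin.val_mk]
        rw [X1h (by omega), X1m, X3m (by omega) (by omega), X3l (by omega)]
        norm_num
      by_cases h2 : i = 2
      · subst h2
        rw [sum_pair_support _ ⟨0, by omega⟩ ⟨2, by omega⟩ (by simp [Fin.ext_iff])
            (fun j hj1 hj2 => by
          obtain ⟨j, hj⟩ := j
          simp only [ne_eq, Fin.mk.injEq] at hj1 hj2
          simp only [Fin.val_mk]
          by_cases h1' : j = 1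
          · subst h1'; rw [X1h (by omega), X1h (by omega)]; ring
          by_cases h3 : j = 3
          · subst h3; rw [X3m (by omega) (by omega), X3m (by omega) (by omega)]; ring
          · rw [XB0 (by omega) (by omega), XB0 (by omega) (by omega)]; ring)]
        simp only [Fin.val_mk]
        rw [X0m, X00 (by omega), X2h (by omega), X2m (by omega) (by omega)]
        norm_num
      by_cases h3 : i = 3
      · subst h3
        rw [sum_pair_support _ ⟨0, by omega⟩ ⟨3, by omega⟩ (by simp [Fin.ext_iff])
            (fun j hj1 hj2 => by
          obtain ⟨j, hj⟩ := j
          simp only [ne_eq, Fin.mk.injEq] at hj1 hj2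
          simp only [Fin.val_mk]
          by_cases h1' : j = 1
          · subst h1'; rw [X1h (by omega), X1h (by omega)]; ring
          by_cases h2' : j = 2
          · subst h2'; rw [X2h (by omega), X2h (by omega)]; ring
          · rw [XB0 (by omega) (by omega), XB0 (by omega) (by omega)]; ring)]
        simp only [Fin.val_mk]
        rw [X0h (by omega), X0m, X3h (by omega), X3m (by omega) (by omega)]
        norm_num
      · have h4 : 4 ≤ i := by omega
        rw [sum_single_support _ ⟨i, hi⟩ (fun j hj1 => by
          obtain ⟨j, hj⟩ := j
          simp only [ne_eq, Fin.mk.injEq] at hj1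
          simp only [Fin.val_mk]
          by_cases h0' : j = 0
          · subst h0'; rw [X0h (by omega), X0h (by omega)]; ring
          by_cases h1' : j = 1
          · subst h1'; rw [X1h (by omega), X1h (by omega)]; ring
          by_cases h2' : j = 2
          · subst h2'; rw [X2h (by omega), X2h (by omega)]; ring
          by_cases h3' : j = 3
          · subst h3'; rw [X3h (by omega), X3h (by omega)]; ring
          rcases Nat.lt_or_ge j i with h | h
          · rw [XB1 (by omega) (by omega), XB1 (by omega) (by omega)]; ring
          · rw [XB0 (by omega) (by omega), XB0 (by omega) (by omega)]; ring)]
        simp only [Fin.val_mk]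
        rw [XB1 (by omega) (by omega), XB0 (by omega) (by omega)]
        norm_num
  refine ⟨fun (i : Fin (r+1)) (j : Fin r) => Xc i j, ⟨hmem, ?_⟩, ⟨1, by omega⟩, ⟨1, by omega⟩,
      fun z h => ?_⟩
  · intro x₁ hx₁ x₂ hx₂ hseg
    obtain ⟨a, b, ha, hb, hab, hsum⟩ := hseg
    have hcomb : ∀ (i : Fin (r+1)) (j : Fin r), a * x₁ i j + b * x₂ i j = Xc i j := by
      intro i j
      have h := congrFun (congrFun hsum i) j
      simpa [smul_eq_mul] using h
    have key : ∀ (i j : ℕ) (hi : i < r) (hj : j < r), Xc i j = Xc (i+1) j →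
        x₁ ⟨i, by omega⟩ ⟨j, hj⟩ = x₁ ⟨i+1, by omega⟩ ⟨j, hj⟩ ∧
        x₂ ⟨i, by omega⟩ ⟨j, hj⟩ = x₂ ⟨i+1, by omega⟩ ⟨j, hj⟩ := by
      intro i j hi hj hX
      have m1 : x₁ ⟨i, by omega⟩ ⟨j, hj⟩ ≤ x₁ ⟨i+1, by omega⟩ ⟨j, hj⟩ :=
        hx₁.1.1 ⟨i, hi⟩ ⟨j, hj⟩
      have m2 : x₂ ⟨i, by omega⟩ ⟨j, hj⟩ ≤ x₂ ⟨i+1, by omega⟩ ⟨j, hj⟩ :=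
        hx₂.1.1 ⟨i, hi⟩ ⟨j, hj⟩
      have e1 := hcomb ⟨i, by omega⟩ ⟨j, hj⟩
      have e2 := hcomb ⟨i+1, by omega⟩ ⟨j, hj⟩
      simp only [Fin.val_mk] at e1 e2
      exact combo ha hb m1 m2 (by rw [e1, e2, hX])
    have keyD : x₁ ⟨2, by omega⟩ ⟨3, by omega⟩ = x₁ ⟨1, by omega⟩ ⟨2, by omega⟩ ∧
        x₂ ⟨2, by omega⟩ ⟨3, by omega⟩ = x₂ ⟨1, by omega⟩ ⟨2, by omega⟩ := by
      have m1 : x₁ ⟨2, by omega⟩ ⟨3, by omega⟩ ≤ x₁ ⟨1, by omega⟩ ⟨2, by omega⟩ :=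
        hx₁.1.2 ⟨1, by omega⟩ ⟨2, by omega⟩ (by simp only [Fin.val_mk]; omega)
      have m2 : x₂ ⟨2, by omega⟩ ⟨3, by omega⟩ ≤ x₂ ⟨1, by omega⟩ ⟨2, by omega⟩ :=
        hx₂.1.2 ⟨1, by omega⟩ ⟨2, by omega⟩ (by simp only [Fin.val_mk]; omega)
      have e1 := hcomb ⟨2, by omega⟩ ⟨3, by omega⟩
      have e2 := hcomb ⟨1, by omega⟩ ⟨2, by omega⟩
      simp only [Fin.val_mk] at e1 e2
      refine combo ha hb m1 m2 ?_
      rw [e1, e2, X3m (by omega) (by omega), X2m (by omega) (by omega)]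
    refine (show x₁ = (fun (i : Fin (r+1)) (j : Fin r) => Xc i j) ∧ x₂ = (fun (i : Fin (r+1)) (j : Fin r) => Xc i j) from ?_).1
    constructor
    · funext i j
      exact uniq r hr x₁ hx₁ (fun i j hi hj hX => (key i j hi hj hX).1) keyD.1.symm i j
    · funext i j
      exact uniq r hr x₂ hx₂ (fun i j hi hj hX => (key i j hi hj hX).2) keyD.2.symm i j
  · have h' : Xc 1 1 = (z : ℝ) := h
    rw [X1m] at h'
    have h2 : (2:ℝ) * (z : ℝ) = 3 := by linarith
    have h3 : (2 * z : ℤ) = 3 := by exact_mod_cast h2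
    omega
end

section
/- Let λ/μ be a skew diagram (λ, μ weakly decreasing nonnegative integer vectors of length n with λ ≥ μ) with no empty rows (λ_i > μ_i for all i) and no empty columns (for every 1 ≤ c ≤ λ_1 there is an i with μ_i < c ≤ λ_i). Suppose λ/μ does not contain, as a subdiagram, any of the following skew shapes: (3,2)/(1,0), (2,2,1)/(1,0,0), (3,2,1)/(2,0,0), (3,2,1)/(1,1,0), (3,2,2)/(2,1,0), (3,3,1)/(2,1,0), (2,2,1,1)/(1,1,0,0), nor any shape (with r ≥ 4 parts, hence ≥ 4 boxes) of the three families (3,2,1,…,1)/(2,1,0,…,0), (3,2,…,2,1)/(2,1,…,1,0), (3,…,3,2,1)/(2,…,2,1,0). Then λ/μ is one of: (a) a disjoint union of rows (μ_i ≥ λ_{i+1} for all 1 ≤ i < n); (b) the 2×2-box, i.e., n = 2, λ = (2,2), μ = (0,0); (c) a hook λ = (h,1,…,1) with μ = (0,…,0), or a hook with its corner box missing, λ = (h,1,…,1) with μ = (1,0,…,0); (d) a reverse hook λ = (h,…,h) with μ = (h−1,…,h−1,0), or a reverse hook with its corner box missing, λ = (h,…,h,h−1) with μ = (h−1,…,h−1,0).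 -/
set_option maxRecDepth 40000
set_option maxHeartbeats 1000000

open Finset

/-- Box `(i,j)` belongs to the skew diagram `λ/μ`. -/
def InDiagram {n : ℕ} (lam mu : Fin n → ℤ) (i : Fin n) (j : ℤ) : Prop :=
  mu i < j ∧ j ≤ lam i

/-- The skew shape `α/β` is a subdiagram of `λ/μ`: there are strictly
increasing row and column maps embedding the boxes of `α/β` into the boxes of
`λ/μ`. -/
def ContainsSub {n n' : ℕ} (lam mu : Fin n → ℤ) (alpha beta : Fin n' → ℤ) : Prop :=
  ∃ r : Fin n' → Fin n, StrictMono r ∧ ∃ c : ℤ → ℤ, StrictMono c ∧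
    ∀ (i : Fin n') (j : ℤ), InDiagram alpha beta i j → InDiagram lam mu (r i) (c j)

/-- Piecewise-linear strictly monotone interpolation through `1 ↦ x`, `2 ↦ y`, `3 ↦ z`. -/
def cmAux (x y z : ℤ) : ℤ → ℤ :=
  fun t => if t ≤ 1 then x + (t - 1) else if t = 2 then y else z + (t - 3)

lemma cmAux_mono {x y z : ℤ} (h1 : x < y) (h2 : y < z) : StrictMono (cmAux x y z) := by
  intro a b hab; unfold cmAux; split_ifs <;> omega

lemma cmAux1 (x y z : ℤ) : cmAux x y z 1 = x := by norm_num [cmAux]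
lemma cmAux2 (x y z : ℤ) : cmAux x y z 2 = y := by norm_num [cmAux]
lemma cmAux3 (x y z : ℤ) : cmAux x y z 3 = z := by norm_num [cmAux]

lemma smAux2 {n : ℕ} {a b : Fin n} (h : a < b) : StrictMono ![a, b] := by
  rw [Fin.strictMono_iff_lt_succ]; intro i; fin_cases i; simpa using h

lemma smAux3 {n : ℕ} {a b c : Fin n} (h1 : a < b) (h2 : b < c) : StrictMono ![a, b, c] := by
  rw [Fin.strictMono_iff_lt_succ]
  intro i
  fin_cases i <;>
    simp [show (Fin.castSucc 1 : Fin 3) = 1 from rfl, h1, h2]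

lemma smAux4 {n : ℕ} {a b c d : Fin n} (h1 : a < b) (h2 : b < c) (h3 : c < d) :
    StrictMono ![a, b, c, d] := by
  rw [Fin.strictMono_iff_lt_succ]
  intro i
  fin_cases i <;>
    simp [show (Fin.castSucc 1 : Fin 4) = 1 from rfl, show (Fin.castSucc 2 : Fin 4) = 2 from rfl,
      show (Fin.succ 2 : Fin 4) = 3 from rfl, h1, h2, h3]

section Patterns

variable {n : ℕ} {lam mu : Fin n → ℤ}

lemma pat1 (h : ¬ ContainsSub lam mu ![3, 2] ![1, 0])
    {a b : Fin n} (hab : a < b) {x y z : ℤ} (hxy : x < y) (hyz : y < z)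
    (p1 : mu a < y) (p2 : z ≤ lam a) (p3 : mu b < x) (p4 : y ≤ lam b) : False := by
  apply h
  refine ⟨![a, b], smAux2 hab, cmAux x y z, cmAux_mono hxy hyz, ?_⟩
  intro i j hj
  obtain ⟨hj1, hj2⟩ := hj
  fin_cases i
  · norm_num at hj1 hj2
    show InDiagram lam mu a (cmAux x y z j)
    interval_cases j <;> constructor <;> simp only [cmAux1, cmAux2, cmAux3] <;> omega
  · norm_num at hj1 hj2
    show InDiagram lam mu b (cmAux x y z j)
    interval_cases j <;> constructor <;> simp only [cmAux1, cmAux2, cmAux3] <;> omega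

lemma pat2 (h : ¬ ContainsSub lam mu ![2, 2, 1] ![1, 0, 0])
    {a b c : Fin n} (hab : a < b) (hbc : b < c) {x y : ℤ} (hxy : x < y)
    (p1 : mu a < y) (p2 : y ≤ lam a) (p3 : mu b < x) (p4 : y ≤ lam b)
    (p5 : mu c < x) (p6 : x ≤ lam c) : False := by
  apply h
  refine ⟨![a, b, c], smAux3 hab hbc, cmAux x y (y + 1), cmAux_mono hxy (by omega), ?_⟩
  intro i j hj
  obtain ⟨hj1, hj2⟩ := hj
  fin_cases i
  · norm_num at hj1 hj2
    show InDiagram lam mu a (cmAux x y (y + 1) j)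
    interval_cases j <;> constructor <;> simp only [cmAux1, cmAux2, cmAux3] <;> omega
  · norm_num at hj1 hj2
    show InDiagram lam mu b (cmAux x y (y + 1) j)
    interval_cases j <;> constructor <;> simp only [cmAux1, cmAux2, cmAux3] <;> omega
  · norm_num at hj1 hj2
    show InDiagram lam mu c (cmAux x y (y + 1) j)
    interval_cases j <;> constructor <;> simp only [cmAux1, cmAux2, cmAux3] <;> omega

lemma pat3 (h : ¬ ContainsSub lam mu ![3, 2, 1] ![2, 0, 0])
    {a b c : Fin n} (hab : a < b) (hbc : b < c) {x y z : ℤ} (hxy : x < y) (hyz : y < z)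
    (p1 : mu a < z) (p2 : z ≤ lam a) (p3 : mu b < x) (p4 : y ≤ lam b)
    (p5 : mu c < x) (p6 : x ≤ lam c) : False := by
  apply h
  refine ⟨![a, b, c], smAux3 hab hbc, cmAux x y z, cmAux_mono hxy hyz, ?_⟩
  intro i j hj
  obtain ⟨hj1, hj2⟩ := hj
  fin_cases i
  · norm_num at hj1 hj2
    show InDiagram lam mu a (cmAux x y z j)
    interval_cases j <;> constructor <;> simp only [cmAux1, cmAux2, cmAux3] <;> omega
  · norm_num at hj1 hj2
    show InDiagram lam mu b (cmAux x y z j)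
    interval_cases j <;> constructor <;> simp only [cmAux1, cmAux2, cmAux3] <;> omega
  · norm_num at hj1 hj2
    show InDiagram lam mu c (cmAux x y z j)
    interval_cases j <;> constructor <;> simp only [cmAux1, cmAux2, cmAux3] <;> omega

lemma pat4 (h : ¬ ContainsSub lam mu ![3, 2, 1] ![1, 1, 0])
    {a b c : Fin n} (hab : a < b) (hbc : b < c) {x y z : ℤ} (hxy : x < y) (hyz : y < z)
    (p1 : mu a < y) (p2 : z ≤ lam a) (p3 : mu b < y) (p4 : y ≤ lam b)
    (p5 : mu c < x) (p6 : x ≤ lam c) : False := by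
  apply h
  refine ⟨![a, b, c], smAux3 hab hbc, cmAux x y z, cmAux_mono hxy hyz, ?_⟩
  intro i j hj
  obtain ⟨hj1, hj2⟩ := hj
  fin_cases i
  · norm_num at hj1 hj2
    show InDiagram lam mu a (cmAux x y z j)
    interval_cases j <;> constructor <;> simp only [cmAux1, cmAux2, cmAux3] <;> omega
  · norm_num at hj1 hj2
    show InDiagram lam mu b (cmAux x y z j)
    interval_cases j <;> constructor <;> simp only [cmAux1, cmAux2, cmAux3] <;> omega
  · norm_num at hj1 hj2
    show InDiagram lam mu c (cmAux x y z j)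
    interval_cases j <;> constructor <;> simp only [cmAux1, cmAux2, cmAux3] <;> omega

lemma pat5 (h : ¬ ContainsSub lam mu ![3, 2, 2] ![2, 1, 0])
    {a b c : Fin n} (hab : a < b) (hbc : b < c) {x y z : ℤ} (hxy : x < y) (hyz : y < z)
    (p1 : mu a < z) (p2 : z ≤ lam a) (p3 : mu b < y) (p4 : y ≤ lam b)
    (p5 : mu c < x) (p6 : y ≤ lam c) : False := by
  apply h
  refine ⟨![a, b, c], smAux3 hab hbc, cmAux x y z, cmAux_mono hxy hyz, ?_⟩
  intro i j hj
  obtain ⟨hj1, hj2⟩ := hj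
  fin_cases i
  · norm_num at hj1 hj2
    show InDiagram lam mu a (cmAux x y z j)
    interval_cases j <;> constructor <;> simp only [cmAux1, cmAux2, cmAux3] <;> omega
  · norm_num at hj1 hj2
    show InDiagram lam mu b (cmAux x y z j)
    interval_cases j <;> constructor <;> simp only [cmAux1, cmAux2, cmAux3] <;> omega
  · norm_num at hj1 hj2
    show InDiagram lam mu c (cmAux x y z j)
    interval_cases j <;> constructor <;> simp only [cmAux1, cmAux2, cmAux3] <;> omega

lemma pat6 (h : ¬ ContainsSub lam mu ![3, 3, 1] ![2, 1, 0])
    {a b c : Fin n} (hab : a < b) (hbc : b < c) {x y z : ℤ} (hxy : x < y) (hyz : y < z)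
    (p1 : mu a < z) (p2 : z ≤ lam a) (p3 : mu b < y) (p4 : z ≤ lam b)
    (p5 : mu c < x) (p6 : x ≤ lam c) : False := by
  apply h
  refine ⟨![a, b, c], smAux3 hab hbc, cmAux x y z, cmAux_mono hxy hyz, ?_⟩
  intro i j hj
  obtain ⟨hj1, hj2⟩ := hj
  fin_cases i
  · norm_num at hj1 hj2
    show InDiagram lam mu a (cmAux x y z j)
    interval_cases j <;> constructor <;> simp only [cmAux1, cmAux2, cmAux3] <;> omega
  · norm_num at hj1 hj2
    show InDiagram lam mu b (cmAux x y z j)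
    interval_cases j <;> constructor <;> simp only [cmAux1, cmAux2, cmAux3] <;> omega
  · norm_num at hj1 hj2
    show InDiagram lam mu c (cmAux x y z j)
    interval_cases j <;> constructor <;> simp only [cmAux1, cmAux2, cmAux3] <;> omega

lemma pat7 (h : ¬ ContainsSub lam mu ![2, 2, 1, 1] ![1, 1, 0, 0])
    {a b c d : Fin n} (hab : a < b) (hbc : b < c) (hcd : c < d) {x y : ℤ} (hxy : x < y)
    (p1 : mu a < y) (p2 : y ≤ lam a) (p3 : mu b < y) (p4 : y ≤ lam b)
    (p5 : mu c < x) (p6 : x ≤ lam c) (p7 : mu d < x) (p8 : x ≤ lam d) : False := by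
  apply h
  refine ⟨![a, b, c, d], smAux4 hab hbc hcd, cmAux x y (y + 1), cmAux_mono hxy (by omega), ?_⟩
  intro i j hj
  obtain ⟨hj1, hj2⟩ := hj
  fin_cases i
  · norm_num at hj1 hj2
    show InDiagram lam mu a (cmAux x y (y + 1) j)
    interval_cases j <;> constructor <;> simp only [cmAux1, cmAux2, cmAux3] <;> omega
  · norm_num at hj1 hj2
    show InDiagram lam mu b (cmAux x y (y + 1) j)
    interval_cases j <;> constructor <;> simp only [cmAux1, cmAux2, cmAux3] <;> omega
  · norm_num at hj1 hj2
    show InDiagram lam mu c (cmAux x y (y + 1) j)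
    interval_cases j <;> constructor <;> simp only [cmAux1, cmAux2, cmAux3] <;> omega
  · norm_num at hj1 hj2
    show InDiagram lam mu d (cmAux x y (y + 1) j)
    interval_cases j <;> constructor <;> simp only [cmAux1, cmAux2, cmAux3] <;> omega

lemma patQ1 (h : ¬ ContainsSub lam mu
      (fun i : Fin 4 => if (i : ℕ) = 0 then 3 else if (i : ℕ) = 1 then 2 else 1)
      (fun i : Fin 4 => if (i : ℕ) = 0 then 2 else if (i : ℕ) = 1 then 1 else 0))
    {a b c d : Fin n} (hab : a < b) (hbc : b < c) (hcd : c < d)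
    {x y z : ℤ} (hxy : x < y) (hyz : y < z)
    (p1 : mu a < z) (p2 : z ≤ lam a) (p3 : mu b < y) (p4 : y ≤ lam b)
    (p5 : mu c < x) (p6 : x ≤ lam c) (p7 : mu d < x) (p8 : x ≤ lam d) : False := by
  apply h
  refine ⟨![a, b, c, d], smAux4 hab hbc hcd, cmAux x y z, cmAux_mono hxy hyz, ?_⟩
  intro i j hj
  obtain ⟨hj1, hj2⟩ := hj
  fin_cases i
  · norm_num at hj1 hj2
    show InDiagram lam mu a (cmAux x y z j)
    interval_cases j <;> constructor <;> simp only [cmAux1, cmAux2, cmAux3] <;> omega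
  · norm_num at hj1 hj2
    show InDiagram lam mu b (cmAux x y z j)
    interval_cases j <;> constructor <;> simp only [cmAux1, cmAux2, cmAux3] <;> omega
  · norm_num at hj1 hj2
    show InDiagram lam mu c (cmAux x y z j)
    interval_cases j <;> constructor <;> simp only [cmAux1, cmAux2, cmAux3] <;> omega
  · norm_num at hj1 hj2
    show InDiagram lam mu d (cmAux x y z j)
    interval_cases j <;> constructor <;> simp only [cmAux1, cmAux2, cmAux3] <;> omega

lemma patQ2 (h : ¬ ContainsSub lam mu
      (fun i : Fin 4 => if (i : ℕ) = 0 then 3 else if (i : ℕ) = 4 - 1 then 1 else 2)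
      (fun i : Fin 4 => if (i : ℕ) = 0 then 2 else if (i : ℕ) = 4 - 1 then 0 else 1))
    {a b c d : Fin n} (hab : a < b) (hbc : b < c) (hcd : c < d)
    {x y z : ℤ} (hxy : x < y) (hyz : y < z)
    (p1 : mu a < z) (p2 : z ≤ lam a) (p3 : mu b < y) (p4 : y ≤ lam b)
    (p5 : mu c < y) (p6 : y ≤ lam c) (p7 : mu d < x) (p8 : x ≤ lam d) : False := by
  apply h
  refine ⟨![a, b, c, d], smAux4 hab hbc hcd, cmAux x y z, cmAux_mono hxy hyz, ?_⟩
  intro i j hj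
  obtain ⟨hj1, hj2⟩ := hj
  fin_cases i
  · norm_num at hj1 hj2
    show InDiagram lam mu a (cmAux x y z j)
    interval_cases j <;> constructor <;> simp only [cmAux1, cmAux2, cmAux3] <;> omega
  · norm_num at hj1 hj2
    show InDiagram lam mu b (cmAux x y z j)
    interval_cases j <;> constructor <;> simp only [cmAux1, cmAux2, cmAux3] <;> omega
  · norm_num at hj1 hj2
    show InDiagram lam mu c (cmAux x y z j)
    interval_cases j <;> constructor <;> simp only [cmAux1, cmAux2, cmAux3] <;> omega
  · norm_num at hj1 hj2
    show InDiagram lam mu d (cmAux x y z j)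
    interval_cases j <;> constructor <;> simp only [cmAux1, cmAux2, cmAux3] <;> omega

lemma patQ3 (h : ¬ ContainsSub lam mu
      (fun i : Fin 4 => if (i : ℕ) = 4 - 1 then 1 else if (i : ℕ) = 4 - 2 then 2 else 3)
      (fun i : Fin 4 => if (i : ℕ) = 4 - 1 then 0 else if (i : ℕ) = 4 - 2 then 1 else 2))
    {a b c d : Fin n} (hab : a < b) (hbc : b < c) (hcd : c < d)
    {x y z : ℤ} (hxy : x < y) (hyz : y < z)
    (p1 : mu a < z) (p2 : z ≤ lam a) (p3 : mu b < z) (p4 : z ≤ lam b)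
    (p5 : mu c < y) (p6 : y ≤ lam c) (p7 : mu d < x) (p8 : x ≤ lam d) : False := by
  apply h
  refine ⟨![a, b, c, d], smAux4 hab hbc hcd, cmAux x y z, cmAux_mono hxy hyz, ?_⟩
  intro i j hj
  obtain ⟨hj1, hj2⟩ := hj
  fin_cases i
  · norm_num at hj1 hj2
    show InDiagram lam mu a (cmAux x y z j)
    interval_cases j <;> constructor <;> simp only [cmAux1, cmAux2, cmAux3] <;> omega
  · norm_num at hj1 hj2
    show InDiagram lam mu b (cmAux x y z j)
    interval_cases j <;> constructor <;> simp only [cmAux1, cmAux2, cmAux3] <;> omega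
  · norm_num at hj1 hj2
    show InDiagram lam mu c (cmAux x y z j)
    interval_cases j <;> constructor <;> simp only [cmAux1, cmAux2, cmAux3] <;> omega
  · norm_num at hj1 hj2
    show InDiagram lam mu d (cmAux x y z j)
    interval_cases j <;> constructor <;> simp only [cmAux1, cmAux2, cmAux3] <;> omega

end Patterns

theorem skewAux (n : ℕ) (L M : ℕ → ℤ)
    (hL : ∀ i j : ℕ, i ≤ j → j < n → L j ≤ L i)
    (hM : ∀ i j : ℕ, i ≤ j → j < n → M j ≤ M i)
    (hM0 : ∀ i, i < n → 0 ≤ M i)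
    (hrows : ∀ i, i < n → M i < L i)
    (hcols : ∀ c : ℤ, 1 ≤ c → c ≤ L 0 → ∃ i, i < n ∧ M i < c ∧ c ≤ L i)
    (P1 : ∀ a b : ℕ, a < b → b < n → ∀ x y z : ℤ, x < y → y < z →
      M a < y → z ≤ L a → M b < x → y ≤ L b → False)
    (P2 : ∀ a b c : ℕ, a < b → b < c → c < n → ∀ x y : ℤ, x < y →
      M a < y → y ≤ L a → M b < x → y ≤ L b → M c < x → x ≤ L c → False)
    (P3 : ∀ a b c : ℕ, a < b → b < c → c < n → ∀ x y z : ℤ, x < y → y < z →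
      M a < z → z ≤ L a → M b < x → y ≤ L b → M c < x → x ≤ L c → False)
    (P4 : ∀ a b c : ℕ, a < b → b < c → c < n → ∀ x y z : ℤ, x < y → y < z →
      M a < y → z ≤ L a → M b < y → y ≤ L b → M c < x → x ≤ L c → False)
    (P5 : ∀ a b c : ℕ, a < b → b < c → c < n → ∀ x y z : ℤ, x < y → y < z →
      M a < z → z ≤ L a → M b < y → y ≤ L b → M c < x → y ≤ L c → False)
    (P6 : ∀ a b c : ℕ, a < b → b < c → c < n → ∀ x y z : ℤ, x < y → y < z →
      M a < z → z ≤ L a → M b < y → z ≤ L b → M c < x → x ≤ L c → False)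
    (P7 : ∀ a b c d : ℕ, a < b → b < c → c < d → d < n → ∀ x y : ℤ, x < y →
      M a < y → y ≤ L a → M b < y → y ≤ L b → M c < x → x ≤ L c → M d < x → x ≤ L d → False)
    (Q1 : ∀ a b c d : ℕ, a < b → b < c → c < d → d < n → ∀ x y z : ℤ, x < y → y < z →
      M a < z → z ≤ L a → M b < y → y ≤ L b → M c < x → x ≤ L c → M d < x → x ≤ L d → False)
    (Q2 : ∀ a b c d : ℕ, a < b → b < c → c < d → d < n → ∀ x y z : ℤ, x < y → y < z →
      M a < z → z ≤ L a → M b < y → y ≤ L b → M c < y → y ≤ L c → M d < x → x ≤ L d → False)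
    (Q3 : ∀ a b c d : ℕ, a < b → b < c → c < d → d < n → ∀ x y z : ℤ, x < y → y < z →
      M a < z → z ≤ L a → M b < z → z ≤ L b → M c < y → y ≤ L c → M d < x → x ≤ L d → False) :
    (∀ i : ℕ, i + 1 < n → L (i + 1) ≤ M i) ∨
    (n = 2 ∧ (∀ i, i < n → L i = 2) ∧ (∀ i, i < n → M i = 0)) ∨
    (∃ h : ℤ, 1 ≤ h ∧ (∀ i, i < n → L i = if i = 0 then h else 1) ∧
      ((∀ i, i < n → M i = 0) ∨ (∀ i, i < n → M i = if i = 0 then 1 else 0))) ∨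
    (∃ h : ℤ, ((∀ i, i < n → L i = h) ∨
        (∀ i, i < n → L i = if i + 1 = n then h - 1 else h)) ∧
      (∀ i, i < n → M i = if i + 1 = n then 0 else h - 1)) := by
  by_cases hA : ∀ i : ℕ, i + 1 < n → L (i + 1) ≤ M i
  · exact Or.inl hA
  push_neg at hA
  obtain ⟨i₀, hi₀n, hi₀⟩ := hA
  have hn2 : 2 ≤ n := by omega
  -- no empty columns forces consecutive rows to meet or touch
  have G1 : ∀ i : ℕ, i + 1 < n → M i ≤ L (i + 1) := by
    intro i hi
    by_contra hlt
    push_neg at hlt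
    have h1 : (1 : ℤ) ≤ M i := by
      have := hM0 (i + 1) hi; have := hrows (i + 1) hi; omega
    have h2 : M i ≤ L 0 := by
      have := hrows i (by omega); have := hL 0 i (by omega) (by omega); omega
    obtain ⟨j, hjn, hj1, hj2⟩ := hcols (M i) h1 h2
    rcases le_or_gt j i with hji | hji
    · have := hM j i hji (by omega); omega
    · have := hL (i + 1) j hji hjn; omega
  have Mlast : M (n - 1) = 0 := by
    obtain ⟨j, hjn, hj1, hj2⟩ := hcols 1 le_rfl
      (by have := hrows 0 (by omega); have := hM0 0 (by omega); omega)
    have h3 := hM j (n - 1) (by omega) (by omega)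
    have := hM0 (n - 1) (by omega)
    have := hM0 j hjn
    omega
  by_cases hBig : ∃ p, p + 1 < n ∧ M p + 2 ≤ L (p + 1)
  · -- a 2×2 block: the whole diagram is the 2×2 box
    obtain ⟨p, hpn, hov⟩ := hBig
    have hLp : L (p + 1) ≤ L p := hL p (p + 1) (by omega) hpn
    have hMm : M (p + 1) ≤ M p := hM p (p + 1) (by omega) hpn
    have e1 : M (p + 1) = M p := by
      by_contra hne
      exact P1 p (p + 1) (by omega) hpn (M p) (M p + 1) (M p + 2) (by omega) (by omega)
        (by omega) (by omega) (by omega) (by omega)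
    have e2 : L (p + 1) = M p + 2 := by
      by_contra hne
      exact P1 p (p + 1) (by omega) hpn (M p + 1) (M p + 2) (M p + 3) (by omega) (by omega)
        (by omega) (by omega) (by omega) (by omega)
    have e3 : L p = M p + 2 := by
      by_contra hne
      exact P1 p (p + 1) (by omega) hpn (M p + 1) (M p + 2) (M p + 3) (by omega) (by omega)
        (by omega) (by omega) (by omega) (by omega)
    have hq : ¬ (p + 2 < n) := by
      intro hq
      have hLq2 : L (p + 2) ≤ M p + 2 := by have := hL (p + 1) (p + 2) (by omega) hq; omega
      have hMq2 : M (p + 2) ≤ M p := by have := hM (p + 1) (p + 2) (by omega) hq; omega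
      rcases le_or_gt (M p + 1) (L (p + 2)) with hc | hc
      · exact P2 p (p + 1) (p + 2) (by omega) (by omega) hq (M p + 1) (M p + 2) (by omega)
          (by omega) (by omega) (by omega) (by omega) (by omega) (by omega)
      · have hGq : M (p + 1) ≤ L (p + 2) := G1 (p + 1) hq
        have h5 : M (p + 2) < L (p + 2) := hrows (p + 2) hq
        exact P6 p (p + 1) (p + 2) (by omega) (by omega) hq (M p) (M p + 1) (M p + 2)
          (by omega) (by omega) (by omega) (by omega) (by omega) (by omega) (by omega) (by omega)
    have hp0 : p = 0 := by
      by_contra hne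
      have hpo : p - 1 + 1 = p := by omega
      have hMo : M p ≤ M (p - 1) := hM (p - 1) p (by omega) (by omega)
      have hMoL : M (p - 1) ≤ L p := by have := G1 (p - 1) (by omega); rwa [hpo] at this
      have hLo : L p ≤ L (p - 1) := hL (p - 1) p (by omega) (by omega)
      rcases le_or_gt (M (p - 1)) (M p + 1) with hc | hc
      · exact P2 (p - 1) p (p + 1) (by omega) (by omega) hpn (M p + 1) (M p + 2) (by omega)
          (by omega) (by omega) (by omega) (by omega) (by omega) (by omega)
      · have h5 : M (p - 1) < L (p - 1) := hrows (p - 1) (by omega)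
        exact P5 (p - 1) p (p + 1) (by omega) (by omega) hpn (M p + 1) (M p + 2) (M p + 3)
          (by omega) (by omega) (by omega) (by omega) (by omega) (by omega) (by omega) (by omega)
    have hn2' : n = 2 := by omega
    have hMp0 : M p = 0 := by
      have : p + 1 = n - 1 := by omega
      rw [this] at e1; omega
    subst hn2'
    rw [hp0] at e1 e2 e3 hMp0
    rw [show (0:ℕ) + 1 = 1 from rfl] at e1 e2
    refine Or.inr (Or.inl ⟨rfl, ?_, ?_⟩) <;> intro i hi <;> interval_cases i <;> omega
  -- Now all adjacent overlaps have width ≤ 1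
  push_neg at hBig
  have pc : ∀ p, p + 1 < n → L (p + 1) = M p ∨ L (p + 1) = M p + 1 := by
    intro p hp; have := G1 p hp; have := hBig p hp; omega
  have g0 : L (i₀ + 1) = M i₀ + 1 := by have := hBig i₀ hi₀n; omega
  -- Lemma D : below a split, a glued pair consists of two single boxes
  have LemD : ∀ s p : ℕ, s + 1 < n → L (s + 1) = M s → p + 1 < n → L (p + 1) = M p + 1 →
      s < p → L p = M p + 1 ∧ M (p + 1) = M p := by
    intro s p hsn hs hpn hp hsp
    have ht1 : (1 : ℤ) ≤ M s := by
      have := hrows (s + 1) hsn; have := hM0 (s + 1) hsn; omega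
    have hLpt : L p ≤ M s := by have := hL (s + 1) p hsp (by omega); omega
    have hLL : L (p + 1) ≤ L p := hL p (p + 1) (by omega) hpn
    have hMp1 : M (p + 1) ≤ M p := hM p (p + 1) (by omega) hpn
    have hsL : M s < L s := hrows s (by omega)
    constructor
    · by_contra hne
      exact P3 s p (p + 1) hsp (by omega) hpn (M p + 1) (M p + 2) (M s + 1)
        (by omega) (by omega) (by omega) (by omega) (by omega) (by omega) (by omega) (by omega)
    · by_contra hne
      exact P5 s p (p + 1) hsp (by omega) hpn (M p) (M p + 1) (M s + 1)
        (by omega) (by omega) (by omega) (by omega) (by omega) (by omega) (by omega) (by omega)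
  -- Lemma U : above a split, a glued pair consists of two single boxes
  have LemU : ∀ s p : ℕ, s + 1 < n → L (s + 1) = M s → L (p + 1) = M p + 1 →
      p + 1 ≤ s → L p = M p + 1 ∧ M (p + 1) = M p := by
    intro s p hsn hs hp hps
    have hts : M (s + 1) < M s := by have := hrows (s + 1) hsn; omega
    have hMps : M s ≤ M p := hM p s (by omega) (by omega)
    have hLL : L (p + 1) ≤ L p := hL p (p + 1) (by omega) (by omega)
    have hMp1 : M (p + 1) ≤ M p := hM p (p + 1) (by omega) (by omega)
    have hsLs : M s ≤ L (s + 1) := by omega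
    constructor
    · by_contra hne
      exact P4 p (p + 1) (s + 1) (by omega) (by omega) hsn (M s) (M p + 1) (M p + 2)
        (by omega) (by omega) (by omega) (by omega) (by omega) (by omega) (by omega) (by omega)
    · by_contra hne
      have hMp1s : M s ≤ M (p + 1) := hM (p + 1) s hps (by omega)
      exact P6 p (p + 1) (s + 1) (by omega) (by omega) hsn (M s) (M p) (M p + 1)
        (by omega) (by omega) (by omega) (by omega) (by omega) (by omega) (by omega) (by omega)
  -- no glue both above and below a split
  have LemP7 : ∀ s q p : ℕ, s + 1 < n → L (s + 1) = M s → L (q + 1) = M q + 1 →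
      p + 1 < n → L (p + 1) = M p + 1 → q < s → s < p → False := by
    intro s q p hsn hs hq hpn hp hqs hsp
    have h1 : L (p + 1) ≤ L (s + 1) := hL (s + 1) (p + 1) (by omega) hpn
    have h2 : M s ≤ M q := hM q s (by omega) (by omega)
    have h3 : L (q + 1) ≤ L q := hL q (q + 1) (by omega) (by omega)
    have h4 : L (p + 1) ≤ L p := hL p (p + 1) (by omega) hpn
    have h5 : M (q + 1) < L (q + 1) := hrows (q + 1) (by omega)
    have h6 : M (p + 1) < L (p + 1) := hrows (p + 1) hpn
    exact P7 q (q + 1) p (p + 1) (by omega) (by omega) (by omega) hpn (M p + 1) (M q + 1)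
      (by omega) (by omega) (by omega) (by omega) (by omega) (by omega) (by omega) (by omega)
      (by omega)
  -- propagation downwards from a split
  have LemDG : ∀ s p : ℕ, s + 1 < n → L (s + 1) = M s → p + 1 < n → L (p + 1) = M p + 1 →
      s + 2 ≤ p → L p = M (p - 1) + 1 := by
    intro s p hsn hs hpn hp hsp
    have hpo : p - 1 + 1 = p := by omega
    rcases pc (p - 1) (by omega) with hc | hc
    · exfalso
      rw [hpo] at hc
      obtain ⟨hLp, hMp1⟩ := LemD s p hsn hs hpn hp (by omega)
      have h1 : L (p - 1) ≤ M s := by have := hL (s + 1) (p - 1) (by omega) (by omega); omega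
      have h2 : M (p - 1) < L (p - 1) := hrows (p - 1) (by omega)
      have h3 : M s < L s := hrows s (by omega)
      exact Q1 s (p - 1) p (p + 1) (by omega) (by omega) (by omega) hpn
        (M p + 1) (M p + 2) (M s + 1) (by omega) (by omega) (by omega) (by omega) (by omega)
        (by omega) (by omega) (by omega) (by omega) (by omega)
    · rwa [hpo] at hc
  -- propagation upwards towards a split
  have LemUG : ∀ s p : ℕ, s + 1 < n → L (s + 1) = M s → L (p + 1) = M p + 1 →
      p + 2 ≤ s → L (p + 2) = M (p + 1) + 1 := by
    intro s p hsn hs hp hps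
    rcases pc (p + 1) (by omega) with hc | hc
    · exfalso
      rw [show p + 1 + 1 = p + 2 from rfl] at hc
      obtain ⟨hLp, hMp1⟩ := LemU s p hsn hs hp (by omega)
      have h1 : M s ≤ M (p + 2) := hM (p + 2) s hps (by omega)
      have h2 : M (p + 2) < L (p + 2) := hrows (p + 2) (by omega)
      have h3 : M (s + 1) < L (s + 1) := hrows (s + 1) hsn
      exact Q3 p (p + 1) (p + 2) (s + 1) (by omega) (by omega) (by omega) hsn
        (M s) (M p) (M p + 1) (by omega) (by omega) (by omega) (by omega) (by omega) (by omega)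
        (by omega) (by omega) (by omega) (by omega)
    · rwa [show p + 1 + 1 = p + 2 from rfl] at hc
  -- chains
  have chainD : ∀ s : ℕ, s + 1 < n → L (s + 1) = M s → ∀ k q : ℕ, q + k + 1 < n →
      L (q + k + 1) = M (q + k) + 1 → s < q → L (q + 1) = M q + 1 := by
    intro s hsn hs k
    induction k with
    | zero => intro q h1 h2 h3; simpa using h2
    | succ k ih =>
      intro q h1 h2 h3
      apply ih q (by omega) ?_ h3
      have hgl : L (q + k + 1 + 1) = M (q + k + 1) + 1 := by
        have : q + (k + 1) + 1 = q + k + 1 + 1 := by omega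
        rw [this] at h2
        have : q + (k + 1) = q + k + 1 := by omega
        rwa [this] at h2
      have := LemDG s (q + k + 1) hsn hs (by omega) hgl (by omega)
      have he : q + k + 1 - 1 = q + k := by omega
      rwa [he] at this
  have chainU : ∀ s : ℕ, s + 1 < n → L (s + 1) = M s → ∀ k q : ℕ, L (q + 1) = M q + 1 →
      q + k + 1 ≤ s → L (q + k + 1) = M (q + k) + 1 := by
    intro s hsn hs k
    induction k with
    | zero => intro q h1 h2; simpa using h1
    | succ k ih =>
      intro q h1 h2
      have hk := ih q h1 (by omega)
      have := LemUG s (q + k) hsn hs hk (by omega)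
      have he : q + (k + 1) + 1 = q + k + 2 := by omega
      have he2 : q + (k + 1) = q + k + 1 := by omega
      rw [he, he2]
      exact this
  by_cases hT : ∃ s, s + 1 < n ∧ L (s + 1) = M s
  · -- there is a touching pair
    obtain ⟨s, hsn, hs⟩ := hT
    rcases Nat.lt_or_ge s i₀ with hcase | hcase
    · -- glue below the split : hook minus its corner
      have hs0 : s = 0 := by
        by_contra hne
        rcases pc (s - 1) (by omega) with hc | hc
        · have hkey := chainD (s - 1) (by omega) hc (i₀ - s) s (by omega)
            (by rw [show s + (i₀ - s) + 1 = i₀ + 1 from by omega,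
                  show s + (i₀ - s) = i₀ from by omega]; exact g0) (by omega)
          omega
        · exact LemP7 s (s - 1) i₀ hsn hs hc hi₀n g0 (by omega) (by omega)
      subst hs0
      have hsN : L 1 = M 0 := hs
      have hglAll : ∀ q, 1 ≤ q → q + 1 < n → L (q + 1) = M q + 1 := by
        intro q h1 hq
        rcases pc q hq with htch | hgl2
        · exfalso
          rcases Nat.lt_trichotomy q i₀ with h2 | h2 | h2
          · have := chainD 0 hsn hs (i₀ - q) q (by omega)
              (by rw [show q + (i₀ - q) + 1 = i₀ + 1 from by omega,
                    show q + (i₀ - q) = i₀ from by omega]; exact g0) (by omega)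
            omega
          · rw [h2] at htch; omega
          · have hq2 : 2 ≤ q := by omega
            have hglj : ∀ j, 1 ≤ j → j ≤ q - 1 → L (j + 1) = M j + 1 := by
              intro j hj1 hj2
              rcases Nat.lt_trichotomy j i₀ with h3 | h3 | h3
              · exact chainD 0 hsn hs (i₀ - j) j (by omega)
                  (by rw [show j + (i₀ - j) + 1 = i₀ + 1 from by omega,
                        show j + (i₀ - j) = i₀ from by omega]; exact g0) (by omega)
              · rw [h3]; exact g0
              · have := chainU q hq htch (j - i₀) i₀ g0 (by omega)
                rw [show i₀ + (j - i₀) + 1 = j + 1 from by omega,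
                    show i₀ + (j - i₀) = j from by omega] at this
                exact this
            have hMd : ∀ j, 1 ≤ j → j ≤ q - 1 → M (j + 1) = M j ∧ L j = M j + 1 := by
              intro j hj1 hj2
              have := LemD 0 j hsn hs (by omega) (hglj j hj1 hj2) (by omega)
              exact ⟨this.2, this.1⟩
            have hMcst : ∀ j, 1 ≤ j → j ≤ q → M j = M 1 := by
              intro j
              induction j with
              | zero => intro h _; omega
              | succ j ih =>
                intro h1 h2
                rcases Nat.eq_zero_or_pos j with h4 | h4
                · rw [h4]
                · have e := (hMd j h4 (by omega)).1
                  rw [e]; exact ih h4 (by omega)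
            have hLq : L q = M 1 + 1 := by
              have e := hglj (q - 1) (by omega) (by omega)
              rw [show q - 1 + 1 = q from by omega] at e
              have e2 := hMcst (q - 1) (by omega) (by omega)
              omega
            have hL1 : L 1 = M 1 + 1 := (hMd 1 (by omega) (by omega)).2
            have hM1L : M 1 < L 1 := hrows 1 (by omega)
            have hMqM1 : M q = M 1 := hMcst q (by omega) (by omega)
            have hMq1 : M (q + 1) < L (q + 1) := hrows (q + 1) (by omega)
            have hr0 : M 0 < L 0 := hrows 0 (by omega)
            exact Q2 0 1 q (q + 1) (by omega) (by omega) (by omega) (by omega)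
              (M q) (M 1 + 1) (M 0 + 1) (by omega) (by omega) (by omega) (by omega)
              (by omega) (by omega) (by omega) (by omega) (by omega) (by omega)
        · exact hgl2
      have n3 : 3 ≤ n := by omega
      have hDall : ∀ q, 1 ≤ q → q + 1 < n → L q = M q + 1 ∧ M (q + 1) = M q :=
        fun q h1 hq => LemD 0 q hsn hs hq (hglAll q h1 hq) (by omega)
      have hMz : ∀ j, 1 ≤ j → j < n → M j = 0 := by
        have key : ∀ k, k ≤ n - 2 → M (n - 1 - k) = 0 := by
          intro k
          induction k with
          | zero => intro _; simpa using Mlast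
          | succ k ih =>
            intro hk
            have e := (hDall (n - 1 - (k + 1)) (by omega) (by omega)).2
            rw [show n - 1 - (k + 1) + 1 = n - 1 - k from by omega] at e
            rw [← e]
            exact ih (by omega)
        intro j h1 h2
        have := key (n - 1 - j) (by omega)
        rw [show n - 1 - (n - 1 - j) = j from by omega] at this
        exact this
      have hLone : ∀ j, 1 ≤ j → j < n → L j = 1 := by
        intro j h1 h2
        rcases Nat.lt_or_ge (j + 1) n with h3 | h3
        · have := (hDall j h1 h3).1; have := hMz j h1 h2; omega
        · have hj : j = n - 1 := by omega
          have e := hglAll (n - 2) (by omega) (by omega)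
          rw [show n - 2 + 1 = n - 1 from by omega] at e
          have := hMz (n - 2) (by omega) (by omega)
          rw [hj]; omega
      have hM0v : M 0 = 1 := by
        have := hLone 1 (by omega) (by omega); omega
      refine Or.inr (Or.inr (Or.inl ⟨L 0, ?_, ?_, Or.inr ?_⟩))
      · have := hLone 1 (by omega) (by omega)
        have := hL 0 1 (by omega) (by omega)
        omega
      · intro i hi
        by_cases he : i = 0
        · rw [if_pos he, he]
        · rw [if_neg he]; exact hLone i (by omega) hi
      · intro i hi
        by_cases he : i = 0
        · rw [if_pos he, he]; exact hM0v
        · rw [if_neg he]; exact hMz i (by omega) hi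
    · -- glue above the split : reverse hook minus its corner
      have hcase' : i₀ < s := by
        rcases Nat.eq_or_lt_of_le hcase with h | h
        · exfalso; rw [← h] at hs; omega
        · exact h
      have hsn1 : s = n - 2 := by
        by_contra hne
        rcases pc (s + 1) (by omega) with hc | hc
        · have := chainU (s + 1) (by omega) hc (s - i₀) i₀ g0 (by omega)
          rw [show i₀ + (s - i₀) + 1 = s + 1 from by omega,
              show i₀ + (s - i₀) = s from by omega] at this
          omega
        · exact LemP7 s i₀ (s + 1) hsn hs g0 (by omega) hc (by omega) (by omega)
      have hglAll : ∀ q, q < s → L (q + 1) = M q + 1 := by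
        intro q hq
        rcases pc q (by omega) with htch | hgl2
        · exfalso
          rcases Nat.lt_trichotomy q i₀ with h2 | h2 | h2
          · have hq2 : q + 2 ≤ s := by omega
            have hglj : ∀ j, q + 1 ≤ j → j ≤ s - 1 → L (j + 1) = M j + 1 := by
              intro j hj1 hj2
              rcases Nat.lt_trichotomy j i₀ with h3 | h3 | h3
              · exact chainD q (by omega) htch (i₀ - j) j (by omega)
                  (by rw [show j + (i₀ - j) + 1 = i₀ + 1 from by omega,
                        show j + (i₀ - j) = i₀ from by omega]; exact g0) (by omega)
              · rw [h3]; exact g0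
              · have := chainU s hsn hs (j - i₀) i₀ g0 (by omega)
                rw [show i₀ + (j - i₀) + 1 = j + 1 from by omega,
                    show i₀ + (j - i₀) = j from by omega] at this
                exact this
            have hUd : ∀ j, q + 1 ≤ j → j ≤ s - 1 → M (j + 1) = M j ∧ L j = M j + 1 := by
              intro j hj1 hj2
              have := LemU s j hsn hs (hglj j hj1 hj2) (by omega)
              exact ⟨this.2, this.1⟩
            have hMcst : ∀ j, q + 1 ≤ j → j ≤ s → M j = M (q + 1) := by
              intro j
              induction j with
              | zero => intro h _; omega
              | succ j ih =>
                intro h1 h2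
                rcases Nat.lt_or_ge j q with h4 | h4
                · omega
                · rcases Nat.eq_or_lt_of_le h4 with h5 | h5
                  · rw [h5]
                  · have e := (hUd j (by omega) (by omega)).1
                    rw [e]; exact ih (by omega) (by omega)
            have hLq1 : L (q + 1) = M (q + 1) + 1 := (hUd (q + 1) (by omega) (by omega)).2
            have hLs : L s = M (q + 1) + 1 := by
              have e := hglj (s - 1) (by omega) (by omega)
              rw [show s - 1 + 1 = s from by omega] at e
              have e2 := hMcst (s - 1) (by omega) (by omega)
              omega
            have hMs : M s = M (q + 1) := hMcst s (by omega) (by omega)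
            have h6 : M (s + 1) < L (s + 1) := hrows (s + 1) hsn
            have h7 : M (q + 1) < L (q + 1) := hrows (q + 1) (by omega)
            have h8 : M q < L q := hrows q (by omega)
            exact Q2 q (q + 1) s (s + 1) (by omega) (by omega) (by omega) hsn
              (M s) (M (q + 1) + 1) (M q + 1) (by omega) (by omega) (by omega) (by omega)
              (by omega) (by omega) (by omega) (by omega) (by omega) (by omega)
          · rw [h2] at htch; omega
          · have := chainU s hsn hs (q - i₀) i₀ g0 (by omega)
            rw [show i₀ + (q - i₀) + 1 = q + 1 from by omega,
                show i₀ + (q - i₀) = q from by omega] at this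
            omega
        · exact hgl2
      have n3 : 3 ≤ n := by omega
      have hUall : ∀ q, q < s → L q = M q + 1 ∧ M (q + 1) = M q := by
        intro q hq
        have := LemU s q hsn hs (hglAll q hq) (by omega)
        exact this
      have hMcst : ∀ j, j ≤ s → M j = M 0 := by
        intro j
        induction j with
        | zero => intro _; rfl
        | succ j ih =>
          intro h2
          have e := (hUall j (by omega)).2
          rw [e]; exact ih (by omega)
      have hLk : ∀ j, j < n - 1 → L j = M 0 + 1 := by
        intro j hj
        rcases Nat.lt_or_ge j s with h3 | h3
        · have := (hUall j h3).1; have := hMcst j (by omega); omega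
        · have hj2 : j = s := by omega
          have e := hglAll (s - 1) (by omega)
          rw [show s - 1 + 1 = s from by omega] at e
          have := hMcst (s - 1) (by omega)
          rw [hj2]; omega
      have hLn1 : L (n - 1) = M 0 := by
        have := hMcst s (by omega)
        rw [show n - 1 = s + 1 from by omega]
        omega
      refine Or.inr (Or.inr (Or.inr ⟨M 0 + 1, Or.inr ?_, ?_⟩))
      · intro i hi
        by_cases he : i + 1 = n
        · rw [if_pos he, show i = n - 1 from by omega]; omega
        · rw [if_neg he]; exact hLk i (by omega)
      · intro i hi
        by_cases he : i + 1 = n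
        · rw [if_pos he, show i = n - 1 from by omega]; exact Mlast
        · rw [if_neg he]
          have := hMcst i (by omega)
          omega
  · -- no touching pair : all pairs glued
    push_neg at hT
    have hg : ∀ p, p + 1 < n → L (p + 1) = M p + 1 := by
      intro p hp
      rcases pc p hp with h | h
      · exact absurd h (hT p hp)
      · exact h
    have hC : ∀ p, p + 2 < n → M (p + 1) = M p := by
      intro p hp
      by_contra hne
      have h1 : M (p + 1) ≤ M p := hM p (p + 1) (by omega) (by omega)
      have h2 := hg p (by omega)
      have h3 := hg (p + 1) (by omega)
      rw [show p + 1 + 1 = p + 2 from rfl] at h3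
      have h4 : L (p + 1) ≤ L p := hL p (p + 1) (by omega) (by omega)
      have h5 : M (p + 2) ≤ M (p + 1) := hM (p + 1) (p + 2) (by omega) (by omega)
      exact P2 p (p + 1) (p + 2) (by omega) (by omega) (by omega) (M (p + 1) + 1) (M p + 1)
        (by omega) (by omega) (by omega) (by omega) (by omega) (by omega) (by omega)
    have hMc : ∀ j, j + 1 < n → M j = M 0 := by
      intro j
      induction j with
      | zero => intro _; rfl
      | succ j ih =>
        intro hj
        rw [hC j (by omega)]
        exact ih (by omega)
    have hLc : ∀ j, 1 ≤ j → j < n → L j = M 0 + 1 := by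
      intro j h1 h2
      have h3 := hg (j - 1) (by omega)
      rw [show j - 1 + 1 = j from by omega] at h3
      have h4 := hMc (j - 1) (by omega)
      omega
    rcases Nat.lt_or_ge 2 n with hn3 | hn2e
    · by_cases hL0 : L 0 = M 0 + 1
      · refine Or.inr (Or.inr (Or.inr ⟨M 0 + 1, Or.inl ?_, ?_⟩))
        · intro i hi
          rcases Nat.eq_zero_or_pos i with h | h
          · rw [h]; exact hL0
          · exact hLc i h hi
        · intro i hi
          by_cases he : i + 1 = n
          · rw [if_pos he, show i = n - 1 from by omega]; exact Mlast
          · rw [if_neg he]; have := hMc i (by omega); omega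
      · have hL1 : L 1 = M 0 + 1 := hLc 1 (by omega) (by omega)
        have hL01 : L 1 ≤ L 0 := hL 0 1 (by omega) (by omega)
        have hr0 := hrows 0 (by omega)
        have hM00 : M 0 = 0 := by
          by_contra hne
          have h1 : (1 : ℤ) ≤ M 0 := by have := hM0 0 (by omega); omega
          have hM1 : M 1 = M 0 := hMc 1 (by omega)
          have hLn : L (n - 1) = M 0 + 1 := hLc (n - 1) (by omega) (by omega)
          have hMn : M (n - 1) = 0 := Mlast
          exact P4 0 1 (n - 1) (by omega) (by omega) (by omega) (M 0) (M 0 + 1) (M 0 + 2)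
            (by omega) (by omega) (by omega) (by omega) (by omega) (by omega) (by omega) (by omega)
        refine Or.inr (Or.inr (Or.inl ⟨L 0, by omega, ?_, Or.inl ?_⟩))
        · intro i hi
          by_cases he : i = 0
          · rw [if_pos he, he]
          · rw [if_neg he]; have := hLc i (by omega) hi; omega
        · intro i hi
          rcases Nat.lt_or_ge (i + 1) n with h3 | h3
          · have := hMc i h3; omega
          · rw [show i = n - 1 from by omega]; exact Mlast
    · -- n = 2
      have hn2'' : n = 2 := by omega
      subst hn2''
      have hgl0 : L 1 = M 0 + 1 := hg 0 (by omega)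
      have hM1 : M 1 = 0 := Mlast
      have hL01 : L 1 ≤ L 0 := hL 0 1 (by omega) (by omega)
      have hM10 : M 1 ≤ M 0 := hM 0 1 (by omega) (by omega)
      have hr0 := hrows 0 (by omega)
      have hd : L 0 = M 0 + 1 ∨ M 1 = M 0 := by
        by_contra hne
        push_neg at hne
        obtain ⟨hd1, hd2⟩ := hne
        exact P1 0 1 (by omega) (by omega) (M 0) (M 0 + 1) (M 0 + 2) (by omega) (by omega)
          (by omega) (by omega) (by omega) (by omega)
      rcases hd with hd | hd
      · refine Or.inr (Or.inr (Or.inr ⟨M 0 + 1, Or.inl ?_, ?_⟩)) <;> intro i hi <;>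
          interval_cases i <;> norm_num <;> omega
      · refine Or.inr (Or.inr (Or.inl ⟨L 0, by omega, ?_, Or.inl ?_⟩)) <;> intro i hi <;>
          interval_cases i <;> norm_num <;> omega

/-- A skew diagram with no empty rows or columns that avoids the listed
forbidden subdiagrams is a disjoint union of rows, the 2×2-box, a hook
(possibly with the corner box missing), or a reverse hook (possibly with the
corner box missing). -/
theorem statement12 (n : ℕ) (hn : 1 ≤ n) (lam mu : Fin n → ℤ)
    (hlam : Antitone lam) (hmu : Antitone mu)
    (hmu0 : ∀ j, 0 ≤ mu j) (hge : ∀ j, mu j ≤ lam j)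
    (hrows : ∀ i, mu i < lam i)
    (hcols : ∀ c : ℤ, 1 ≤ c → c ≤ lam ⟨0, hn⟩ → ∃ i, mu i < c ∧ c ≤ lam i)
    (h1 : ¬ ContainsSub lam mu ![3, 2] ![1, 0])
    (h2 : ¬ ContainsSub lam mu ![2, 2, 1] ![1, 0, 0])
    (h3 : ¬ ContainsSub lam mu ![3, 2, 1] ![2, 0, 0])
    (h4 : ¬ ContainsSub lam mu ![3, 2, 1] ![1, 1, 0])
    (h5 : ¬ ContainsSub lam mu ![3, 2, 2] ![2, 1, 0])
    (h6 : ¬ ContainsSub lam mu ![3, 3, 1] ![2, 1, 0])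
    (h7 : ¬ ContainsSub lam mu ![2, 2, 1, 1] ![1, 1, 0, 0])
    (hf1 : ∀ r : ℕ, 4 ≤ r → ¬ ContainsSub lam mu
      (fun i : Fin r => if (i : ℕ) = 0 then 3 else if (i : ℕ) = 1 then 2 else 1)
      (fun i : Fin r => if (i : ℕ) = 0 then 2 else if (i : ℕ) = 1 then 1 else 0))
    (hf2 : ∀ r : ℕ, 4 ≤ r → ¬ ContainsSub lam mu
      (fun i : Fin r => if (i : ℕ) = 0 then 3 else if (i : ℕ) = r - 1 then 1 else 2)
      (fun i : Fin r => if (i : ℕ) = 0 then 2 else if (i : ℕ) = r - 1 then 0 else 1))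
    (hf3 : ∀ r : ℕ, 4 ≤ r → ¬ ContainsSub lam mu
      (fun i : Fin r => if (i : ℕ) = r - 1 then 1 else if (i : ℕ) = r - 2 then 2 else 3)
      (fun i : Fin r => if (i : ℕ) = r - 1 then 0 else if (i : ℕ) = r - 2 then 1 else 2)) :
    -- (a) disjoint union of rows
    (∀ i : Fin n, ∀ h : (i : ℕ) + 1 < n, lam ⟨(i : ℕ) + 1, h⟩ ≤ mu i) ∨
    -- (b) the 2×2-box
    (n = 2 ∧ (∀ i, lam i = 2) ∧ (∀ i, mu i = 0)) ∨
    -- (c) a hook, possibly with the corner box missing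
    (∃ h : ℤ, 1 ≤ h ∧ (∀ i : Fin n, lam i = if (i : ℕ) = 0 then h else 1) ∧
      ((∀ i, mu i = 0) ∨ (∀ i : Fin n, mu i = if (i : ℕ) = 0 then 1 else 0))) ∨
    -- (d) a reverse hook, possibly with the corner box missing
    (∃ h : ℤ, ((∀ i, lam i = h) ∨
        (∀ i : Fin n, lam i = if (i : ℕ) + 1 = n then h - 1 else h)) ∧
      (∀ i : Fin n, mu i = if (i : ℕ) + 1 = n then 0 else h - 1)) := by
  classical
  set L : ℕ → ℤ := fun i => if h : i < n then lam ⟨i, h⟩ else 0 with hLdef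
  set M : ℕ → ℤ := fun i => if h : i < n then mu ⟨i, h⟩ else 0 with hMdef
  have hLe : ∀ (i : ℕ) (h : i < n), L i = lam ⟨i, h⟩ := fun i h => dif_pos h
  have hMe : ∀ (i : ℕ) (h : i < n), M i = mu ⟨i, h⟩ := fun i h => dif_pos h
  have hL' : ∀ i j : ℕ, i ≤ j → j < n → L j ≤ L i := by
    intro i j hij hj
    rw [hLe j hj, hLe i (by omega)]
    exact hlam (by exact Fin.mk_le_mk.mpr hij)
  have hM' : ∀ i j : ℕ, i ≤ j → j < n → M j ≤ M i := by
    intro i j hij hj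
    rw [hMe j hj, hMe i (by omega)]
    exact hmu (by exact Fin.mk_le_mk.mpr hij)
  have hM0' : ∀ i, i < n → 0 ≤ M i := by
    intro i hi; rw [hMe i hi]; exact hmu0 _
  have hrows' : ∀ i, i < n → M i < L i := by
    intro i hi; rw [hMe i hi, hLe i hi]; exact hrows _
  have hcols' : ∀ c : ℤ, 1 ≤ c → c ≤ L 0 → ∃ i, i < n ∧ M i < c ∧ c ≤ L i := by
    intro c hc1 hc2
    rw [hLe 0 (by omega)] at hc2
    obtain ⟨i, hi2, hi3⟩ := hcols c hc1 hc2
    refine ⟨(i : ℕ), i.isLt, ?_, ?_⟩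
    · rw [hMe _ i.isLt]; exact hi2
    · rw [hLe _ i.isLt]; exact hi3
  have P1' : ∀ a b : ℕ, a < b → b < n → ∀ x y z : ℤ, x < y → y < z →
      M a < y → z ≤ L a → M b < x → y ≤ L b → False := by
    intro a b hab hbn x y z hxy hyz q1 q2 q3 q4
    rw [hMe a (by omega)] at q1; rw [hLe a (by omega)] at q2
    rw [hMe b hbn] at q3; rw [hLe b hbn] at q4
    exact pat1 h1 (a := ⟨a, by omega⟩) (b := ⟨b, hbn⟩) (Fin.mk_lt_mk.mpr hab) hxy hyz q1 q2 q3 q4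
  have P2' : ∀ a b c : ℕ, a < b → b < c → c < n → ∀ x y : ℤ, x < y →
      M a < y → y ≤ L a → M b < x → y ≤ L b → M c < x → x ≤ L c → False := by
    intro a b c hab hbc hcn x y hxy q1 q2 q3 q4 q5 q6
    rw [hMe a (by omega)] at q1; rw [hLe a (by omega)] at q2
    rw [hMe b (by omega)] at q3; rw [hLe b (by omega)] at q4
    rw [hMe c hcn] at q5; rw [hLe c hcn] at q6
    exact pat2 h2 (a := ⟨a, by omega⟩) (b := ⟨b, by omega⟩) (c := ⟨c, hcn⟩)
      (Fin.mk_lt_mk.mpr hab) (Fin.mk_lt_mk.mpr hbc) hxy q1 q2 q3 q4 q5 q6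
  have P3' : ∀ a b c : ℕ, a < b → b < c → c < n → ∀ x y z : ℤ, x < y → y < z →
      M a < z → z ≤ L a → M b < x → y ≤ L b → M c < x → x ≤ L c → False := by
    intro a b c hab hbc hcn x y z hxy hyz q1 q2 q3 q4 q5 q6
    rw [hMe a (by omega)] at q1; rw [hLe a (by omega)] at q2
    rw [hMe b (by omega)] at q3; rw [hLe b (by omega)] at q4
    rw [hMe c hcn] at q5; rw [hLe c hcn] at q6
    exact pat3 h3 (a := ⟨a, by omega⟩) (b := ⟨b, by omega⟩) (c := ⟨c, hcn⟩)
      (Fin.mk_lt_mk.mpr hab) (Fin.mk_lt_mk.mpr hbc) hxy hyz q1 q2 q3 q4 q5 q6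
  have P4' : ∀ a b c : ℕ, a < b → b < c → c < n → ∀ x y z : ℤ, x < y → y < z →
      M a < y → z ≤ L a → M b < y → y ≤ L b → M c < x → x ≤ L c → False := by
    intro a b c hab hbc hcn x y z hxy hyz q1 q2 q3 q4 q5 q6
    rw [hMe a (by omega)] at q1; rw [hLe a (by omega)] at q2
    rw [hMe b (by omega)] at q3; rw [hLe b (by omega)] at q4
    rw [hMe c hcn] at q5; rw [hLe c hcn] at q6
    exact pat4 h4 (a := ⟨a, by omega⟩) (b := ⟨b, by omega⟩) (c := ⟨c, hcn⟩)
      (Fin.mk_lt_mk.mpr hab) (Fin.mk_lt_mk.mpr hbc) hxy hyz q1 q2 q3 q4 q5 q6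
  have P5' : ∀ a b c : ℕ, a < b → b < c → c < n → ∀ x y z : ℤ, x < y → y < z →
      M a < z → z ≤ L a → M b < y → y ≤ L b → M c < x → y ≤ L c → False := by
    intro a b c hab hbc hcn x y z hxy hyz q1 q2 q3 q4 q5 q6
    rw [hMe a (by omega)] at q1; rw [hLe a (by omega)] at q2
    rw [hMe b (by omega)] at q3; rw [hLe b (by omega)] at q4
    rw [hMe c hcn] at q5; rw [hLe c hcn] at q6
    exact pat5 h5 (a := ⟨a, by omega⟩) (b := ⟨b, by omega⟩) (c := ⟨c, hcn⟩)
      (Fin.mk_lt_mk.mpr hab) (Fin.mk_lt_mk.mpr hbc) hxy hyz q1 q2 q3 q4 q5 q6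
  have P6' : ∀ a b c : ℕ, a < b → b < c → c < n → ∀ x y z : ℤ, x < y → y < z →
      M a < z → z ≤ L a → M b < y → z ≤ L b → M c < x → x ≤ L c → False := by
    intro a b c hab hbc hcn x y z hxy hyz q1 q2 q3 q4 q5 q6
    rw [hMe a (by omega)] at q1; rw [hLe a (by omega)] at q2
    rw [hMe b (by omega)] at q3; rw [hLe b (by omega)] at q4
    rw [hMe c hcn] at q5; rw [hLe c hcn] at q6
    exact pat6 h6 (a := ⟨a, by omega⟩) (b := ⟨b, by omega⟩) (c := ⟨c, hcn⟩)
      (Fin.mk_lt_mk.mpr hab) (Fin.mk_lt_mk.mpr hbc) hxy hyz q1 q2 q3 q4 q5 q6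
  have P7' : ∀ a b c d : ℕ, a < b → b < c → c < d → d < n → ∀ x y : ℤ, x < y →
      M a < y → y ≤ L a → M b < y → y ≤ L b → M c < x → x ≤ L c → M d < x → x ≤ L d → False := by
    intro a b c d hab hbc hcd hdn x y hxy q1 q2 q3 q4 q5 q6 q7 q8
    rw [hMe a (by omega)] at q1; rw [hLe a (by omega)] at q2
    rw [hMe b (by omega)] at q3; rw [hLe b (by omega)] at q4
    rw [hMe c (by omega)] at q5; rw [hLe c (by omega)] at q6
    rw [hMe d hdn] at q7; rw [hLe d hdn] at q8
    exact pat7 h7 (a := ⟨a, by omega⟩) (b := ⟨b, by omega⟩) (c := ⟨c, by omega⟩) (d := ⟨d, hdn⟩)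
      (Fin.mk_lt_mk.mpr hab) (Fin.mk_lt_mk.mpr hbc) (Fin.mk_lt_mk.mpr hcd) hxy
      q1 q2 q3 q4 q5 q6 q7 q8
  have Q1' : ∀ a b c d : ℕ, a < b → b < c → c < d → d < n → ∀ x y z : ℤ, x < y → y < z →
      M a < z → z ≤ L a → M b < y → y ≤ L b → M c < x → x ≤ L c → M d < x → x ≤ L d → False := by
    intro a b c d hab hbc hcd hdn x y z hxy hyz q1 q2 q3 q4 q5 q6 q7 q8
    rw [hMe a (by omega)] at q1; rw [hLe a (by omega)] at q2
    rw [hMe b (by omega)] at q3; rw [hLe b (by omega)] at q4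
    rw [hMe c (by omega)] at q5; rw [hLe c (by omega)] at q6
    rw [hMe d hdn] at q7; rw [hLe d hdn] at q8
    exact patQ1 (hf1 4 (by norm_num))
      (a := ⟨a, by omega⟩) (b := ⟨b, by omega⟩) (c := ⟨c, by omega⟩) (d := ⟨d, hdn⟩)
      (Fin.mk_lt_mk.mpr hab) (Fin.mk_lt_mk.mpr hbc) (Fin.mk_lt_mk.mpr hcd) hxy hyz
      q1 q2 q3 q4 q5 q6 q7 q8
  have Q2' : ∀ a b c d : ℕ, a < b → b < c → c < d → d < n → ∀ x y z : ℤ, x < y → y < z →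
      M a < z → z ≤ L a → M b < y → y ≤ L b → M c < y → y ≤ L c → M d < x → x ≤ L d → False := by
    intro a b c d hab hbc hcd hdn x y z hxy hyz q1 q2 q3 q4 q5 q6 q7 q8
    rw [hMe a (by omega)] at q1; rw [hLe a (by omega)] at q2
    rw [hMe b (by omega)] at q3; rw [hLe b (by omega)] at q4
    rw [hMe c (by omega)] at q5; rw [hLe c (by omega)] at q6
    rw [hMe d hdn] at q7; rw [hLe d hdn] at q8
    exact patQ2 (hf2 4 (by norm_num))
      (a := ⟨a, by omega⟩) (b := ⟨b, by omega⟩) (c := ⟨c, by omega⟩) (d := ⟨d, hdn⟩)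
      (Fin.mk_lt_mk.mpr hab) (Fin.mk_lt_mk.mpr hbc) (Fin.mk_lt_mk.mpr hcd) hxy hyz
      q1 q2 q3 q4 q5 q6 q7 q8
  have Q3' : ∀ a b c d : ℕ, a < b → b < c → c < d → d < n → ∀ x y z : ℤ, x < y → y < z →
      M a < z → z ≤ L a → M b < z → z ≤ L b → M c < y → y ≤ L c → M d < x → x ≤ L d → False := by
    intro a b c d hab hbc hcd hdn x y z hxy hyz q1 q2 q3 q4 q5 q6 q7 q8
    rw [hMe a (by omega)] at q1; rw [hLe a (by omega)] at q2
    rw [hMe b (by omega)] at q3; rw [hLe b (by omega)] at q4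
    rw [hMe c (by omega)] at q5; rw [hLe c (by omega)] at q6
    rw [hMe d hdn] at q7; rw [hLe d hdn] at q8
    exact patQ3 (hf3 4 (by norm_num))
      (a := ⟨a, by omega⟩) (b := ⟨b, by omega⟩) (c := ⟨c, by omega⟩) (d := ⟨d, hdn⟩)
      (Fin.mk_lt_mk.mpr hab) (Fin.mk_lt_mk.mpr hbc) (Fin.mk_lt_mk.mpr hcd) hxy hyz
      q1 q2 q3 q4 q5 q6 q7 q8
  rcases skewAux n L M hL' hM' hM0' hrows' hcols' P1' P2' P3' P4' P5' P6' P7' Q1' Q2' Q3'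
    with hres | hres | hres | hres
  · left
    intro i hilt
    have := hres (i : ℕ) hilt
    rw [hLe _ hilt, hMe _ i.isLt] at this
    exact this
  · right; left
    obtain ⟨e1, e2, e3⟩ := hres
    refine ⟨e1, fun i => ?_, fun i => ?_⟩
    · have := e2 (i : ℕ) i.isLt; rw [hLe _ i.isLt] at this; exact this
    · have := e3 (i : ℕ) i.isLt; rw [hMe _ i.isLt] at this; exact this
  · right; right; left
    obtain ⟨h, e1, e2, e3⟩ := hres
    refine ⟨h, e1, fun i => ?_, ?_⟩
    · have := e2 (i : ℕ) i.isLt; rw [hLe _ i.isLt] at this; exact this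
    · rcases e3 with e3 | e3
      · left; intro i
        have := e3 (i : ℕ) i.isLt; rw [hMe _ i.isLt] at this; exact this
      · right; intro i
        have := e3 (i : ℕ) i.isLt; rw [hMe _ i.isLt] at this; exact this
  · right; right; right
    obtain ⟨h, e1, e2⟩ := hres
    refine ⟨h, ?_, fun i => ?_⟩
    · rcases e1 with e1 | e1
      · left; intro i
        have := e1 (i : ℕ) i.isLt; rw [hLe _ i.isLt] at this; exact this
      · right; intro i
        have := e1 (i : ℕ) i.isLt; rw [hLe _ i.isLt] at this; exact this
    · have := e2 (i : ℕ) i.isLt; rw [hMe _ i.isLt] at this; exact this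
end

section
/- Let λ, μ ∈ ℚⁿ be nonnegative rational vectors that interlace: λ_1 ≥ μ_1 ≥ λ_2 ≥ μ_2 ≥ … ≥ λ_n ≥ μ_n ≥ 0, and let t ∈ ℚ with μ_1+…+μ_n ≤ t ≤ λ_1+…+λ_n. Then there exists ν ∈ ℚⁿ with λ interlacing ν and ν interlacing μ (λ_1 ≥ ν_1 ≥ λ_2 ≥ … and ν_1 ≥ μ_1 ≥ ν_2 ≥ …), ν_1+…+ν_n = t, and with the following tile-preservation property: for all i, j, if the positions of λ_i and μ_j lie in the same tile of the two-row pattern (λ; μ), then they lie in the same tile of the three-row pattern (λ; ν; μ). Here, the tiles of the two-row pattern are the classes of the equivalence relation on positions generated by: λ_i ∼ μ_i whenever λ_i = μ_i, and μ_i ∼ λ_{i+1} whenever μ_i = λ_{i+1}; the tiles of the three-row pattern are generated by: λ_i ∼ ν_i whenever λ_i = ν_i, ν_i ∼ λ_{i+1} whenever ν_i = λ_{i+1}, ν_i ∼ μ_i whenever ν_i = μ_i, and μ_i ∼ ν_{i+1} whenever μ_i = ν_{i+1}. -/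
open Finset

/-- `a` interlaces `b`: `a_1 ≥ b_1 ≥ a_2 ≥ b_2 ≥ … ≥ a_n ≥ b_n`. -/
def Interlaces {n : ℕ} (a b : Fin n → ℚ) : Prop :=
  (∀ i, b i ≤ a i) ∧
  ∀ (i : Fin n) (h : (i : ℕ) + 1 < n), a ⟨(i : ℕ) + 1, h⟩ ≤ b i

/-- Adjacency-with-equality for a two-row pattern with top row `λ` (row `1`)
and bottom row `μ` (row `0`): `λ_i ∼ μ_i` when `λ_i = μ_i`, and
`μ_i ∼ λ_{i+1}` when `μ_i = λ_{i+1}`. Its reflexive-symmetric-transitive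
closure has the tiles of the pattern as equivalence classes. -/
def adjTwo {n : ℕ} (lam mu : Fin n → ℚ) :
    Fin 2 × Fin n → Fin 2 × Fin n → Prop := fun p q =>
  (∃ i : Fin n, lam i = mu i ∧ p = (1, i) ∧ q = (0, i)) ∨
  (∃ (i : Fin n) (h : (i : ℕ) + 1 < n), mu i = lam ⟨(i : ℕ) + 1, h⟩ ∧
    p = (0, i) ∧ q = (1, ⟨(i : ℕ) + 1, h⟩))

/-- Adjacency-with-equality for a three-row pattern with top row `λ` (row `2`),
middle row `ν` (row `1`) and bottom row `μ` (row `0`). -/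
def adjThree {n : ℕ} (lam nu mu : Fin n → ℚ) :
    Fin 3 × Fin n → Fin 3 × Fin n → Prop := fun p q =>
  (∃ i : Fin n, lam i = nu i ∧ p = (2, i) ∧ q = (1, i)) ∨
  (∃ (i : Fin n) (h : (i : ℕ) + 1 < n), nu i = lam ⟨(i : ℕ) + 1, h⟩ ∧
    p = (1, i) ∧ q = (2, ⟨(i : ℕ) + 1, h⟩)) ∨
  (∃ i : Fin n, nu i = mu i ∧ p = (1, i) ∧ q = (0, i)) ∨
  (∃ (i : Fin n) (h : (i : ℕ) + 1 < n), mu i = nu ⟨(i : ℕ) + 1, h⟩ ∧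
    p = (0, i) ∧ q = (1, ⟨(i : ℕ) + 1, h⟩))

private lemma eqvgen_lift {α β : Type*} {r : α → α → Prop} {E : β → β → Prop}
    (φ : α → β) (h : ∀ a b, r a b → Relation.EqvGen E (φ a) (φ b)) :
    ∀ {a b}, Relation.EqvGen r a b → Relation.EqvGen E (φ a) (φ b) := by
  intro a b hab
  induction hab with
  | rel x y hxy => exact h x y hxy
  | refl x => exact Relation.EqvGen.refl _
  | symm x y _ ih => exact Relation.EqvGen.symm _ _ ih
  | trans x y z _ _ ih1 ih2 => exact Relation.EqvGen.trans _ _ _ ih1 ih2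


lemma exists_level {n : ℕ} (lam mu : Fin n → ℚ)
    (hlam0 : ∀ i, 0 ≤ lam i) (hmu0 : ∀ i, 0 ≤ mu i)
    (hml : ∀ i, mu i ≤ lam i)
    (t : ℚ) (ht1 : ∑ i, mu i ≤ t) (ht2 : t ≤ ∑ i, lam i) :
    ∃ s : ℚ, ∑ i, max (mu i) (min (lam i) s) = t := by
  classical
  set f : ℚ → ℚ := fun s => ∑ i, max (mu i) (min (lam i) s) with hf
  have hlamB : ∀ i, lam i ∈ insert (0:ℚ) ((univ.image lam) ∪ (univ.image mu)) :=
    fun i => mem_insert_of_mem (mem_union_left _ (mem_image_of_mem lam (mem_univ i)))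
  have hmuB : ∀ i, mu i ∈ insert (0:ℚ) ((univ.image lam) ∪ (univ.image mu)) :=
    fun i => mem_insert_of_mem (mem_union_right _ (mem_image_of_mem mu (mem_univ i)))
  set B : Finset ℚ := insert 0 ((univ.image lam) ∪ (univ.image mu)) with hB
  have hf0 : f 0 = ∑ i, mu i := by
    refine Finset.sum_congr rfl fun i _ => ?_
    rw [min_eq_right (hlam0 i), max_eq_left (hmu0 i)]
  set T : Finset ℚ := B.filter (fun x => f x ≤ t) with hT
  have hTne : T.Nonempty := ⟨0, by simp [hT, hB, hf0, ht1]⟩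
  set b : ℚ := T.max' hTne with hb
  have hbT : b ∈ T := T.max'_mem hTne
  have hbB : b ∈ B := (mem_filter.mp hbT).1
  have hfb : f b ≤ t := (mem_filter.mp hbT).2
  have hmax : ∀ x ∈ B, f x ≤ t → x ≤ b := fun x hx hfx =>
    T.le_max' x (mem_filter.mpr ⟨hx, hfx⟩)
  by_cases hbig : ∀ x ∈ B, x ≤ b
  · -- b dominates all lam, so f b = ∑ lam ≥ t
    have : f b = ∑ i, lam i := by
      refine Finset.sum_congr rfl fun i _ => ?_
      rw [min_eq_left (hbig _ (hlamB i)), max_eq_right (hml i)]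
    refine ⟨b, ?_⟩
    show f b = t
    linarith
  · push_neg at hbig
    obtain ⟨x0, hx0B, hx0⟩ := hbig
    set B' : Finset ℚ := B.filter (fun x => b < x) with hB'
    have hB'ne : B'.Nonempty := ⟨x0, mem_filter.mpr ⟨hx0B, hx0⟩⟩
    set b' : ℚ := B'.min' hB'ne with hb'
    have hbb' : b < b' := (mem_filter.mp (B'.min'_mem hB'ne)).2
    have hb'min : ∀ x ∈ B, b < x → b' ≤ x := fun x hx hbx =>
      B'.min'_le x (mem_filter.mpr ⟨hx, hbx⟩)
    have hfb' : t < f b' := by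
      by_contra h
      push_neg at h
      exact absurd (hmax b' (mem_filter.mp (B'.min'_mem hB'ne)).1 h) (not_le.mpr hbb')
    set K : Finset (Fin n) := univ.filter (fun i => mu i ≤ b ∧ b < lam i) with hK
    have key : ∀ s : ℚ, b ≤ s → s ≤ b' → f s = f b + K.card * (s - b) := by
      intro s hs1 hs2
      have hterm : ∀ i : Fin n,
          max (mu i) (min (lam i) s)
            = max (mu i) (min (lam i) b) + (if i ∈ K then s - b else 0) := by
        intro i
        by_cases hi : mu i ≤ b ∧ b < lam i
        · have hlam' : s ≤ lam i := le_trans hs2 (hb'min _ (hlamB i) hi.2)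
          rw [if_pos (by simp [hK, hi])]
          rw [min_eq_right hlam', min_eq_right (le_of_lt hi.2),
            max_eq_right (le_trans hi.1 hs1), max_eq_right hi.1]
          ring
        · rw [if_neg (by simp [hK, hi])]
          rcases not_and_or.mp hi with h1 | h2
          · push_neg at h1
            have hmu' : s ≤ mu i := le_trans hs2 (hb'min _ (hmuB i) h1)
            rw [max_eq_left (le_trans (min_le_right _ _) hmu'),
              max_eq_left (le_trans (min_le_right _ _) (le_of_lt h1)), add_zero]
          · push_neg at h2
            rw [min_eq_left (le_trans h2 hs1), min_eq_left h2, add_zero]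
      calc f s = ∑ i, (max (mu i) (min (lam i) b) + (if i ∈ K then s - b else 0)) :=
            Finset.sum_congr rfl fun i _ => hterm i
        _ = f b + ∑ i, (if i ∈ K then s - b else 0) := by
            rw [Finset.sum_add_distrib]
        _ = f b + K.card * (s - b) := by
            rw [Finset.sum_ite_mem, Finset.univ_inter, Finset.sum_const,
              nsmul_eq_mul]
    have hKne : (K.card : ℚ) ≠ 0 := by
      intro h
      have := key b' (le_of_lt hbb') le_rfl
      rw [h] at this
      simp at this
      linarith
    have hKpos : (0:ℚ) < K.card := lt_of_le_of_ne (Nat.cast_nonneg _) (Ne.symm hKne)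
    refine ⟨b + (t - f b) / K.card, ?_⟩
    have hs1 : b ≤ b + (t - f b) / K.card := by
      have : 0 ≤ (t - f b) / K.card := div_nonneg (by linarith) (le_of_lt hKpos)
      linarith
    have hs2 : b + (t - f b) / K.card ≤ b' := by
      have h1 := key b' (le_of_lt hbb') le_rfl
      have h2 : (t - f b) / K.card < b' - b := by
        rw [div_lt_iff₀ hKpos]
        nlinarith [hfb']
      linarith
    have hkey := key _ hs1 hs2
    show f _ = t
    have hstep : b + (t - f b) / (#K:ℚ) - b = (t - f b) / (#K:ℚ) := by ring
    rw [hkey, hstep, mul_div_cancel₀ _ hKne]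
    ring

/-- Given interlacing nonnegative rational rows `λ ≥_int μ` and a rational
`|μ| ≤ t ≤ |λ|`, there is a middle row `ν` with `λ ≥_int ν ≥_int μ`, `|ν| = t`,
such that entries `λ_i` and `μ_j` lying in the same tile of the two-row
pattern `(λ; μ)` lie in the same tile of the three-row pattern `(λ; ν; μ)`. -/
theorem statement17 (n : ℕ) (hn : 1 ≤ n) (lam mu : Fin n → ℚ)
    (hlam0 : ∀ i, 0 ≤ lam i) (hmu0 : ∀ i, 0 ≤ mu i)
    (hint : Interlaces lam mu)
    (t : ℚ) (ht1 : ∑ i, mu i ≤ t) (ht2 : t ≤ ∑ i, lam i) :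
    ∃ nu : Fin n → ℚ, Interlaces lam nu ∧ Interlaces nu mu ∧
      (∑ i, nu i = t) ∧
      ∀ i j : Fin n, Relation.EqvGen (adjTwo lam mu) (1, i) (0, j) →
        Relation.EqvGen (adjThree lam nu mu) (2, i) (0, j) := by
  classical
  obtain ⟨hml, hcross⟩ := hint
  obtain ⟨s, hs⟩ := exists_level lam mu hlam0 hmu0 hml t ht1 ht2
  set nu : Fin n → ℚ := fun i => max (mu i) (min (lam i) s) with hnu
  have hmunu : ∀ i, mu i ≤ nu i := fun i => le_max_left _ _
  have hnul : ∀ i, nu i ≤ lam i := fun i => max_le (hml i) (min_le_left _ _)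
  refine ⟨nu, ⟨hnul, ?_⟩, ⟨hmunu, ?_⟩, hs, ?_⟩
  · exact fun i h => le_trans (hcross i h) (hmunu i)
  · exact fun i h => le_trans (hnul _) (hcross i h)
  · intro i j hij
    set φ : Fin 2 × Fin n → Fin 3 × Fin n :=
      fun p => (if p.1 = 0 then (0 : Fin 3) else 2, p.2) with hφ
    have hφ0 : ∀ k : Fin n, φ (0, k) = (0, k) := fun k => by simp [hφ]
    have hφ1 : ∀ k : Fin n, φ (1, k) = (2, k) := fun k => by
      simp [hφ]
    have key : ∀ p q, adjTwo lam mu p q →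
        Relation.EqvGen (adjThree lam nu mu) (φ p) (φ q) := by
      rintro p q (⟨k, hk, rfl, rfl⟩ | ⟨k, hk1, hk, rfl, rfl⟩)
      · -- lam k = mu k, so nu k = both
        rw [hφ0, hφ1]
        have h1 : nu k = mu k := le_antisymm (hk ▸ hnul k) (hmunu k)
        have h2 : lam k = nu k := hk.trans h1.symm
        exact Relation.EqvGen.trans _ ((1 : Fin 3), k) _
          (Relation.EqvGen.rel _ _ (Or.inl ⟨k, h2, rfl, rfl⟩))
          (Relation.EqvGen.rel _ _ (Or.inr (Or.inr (Or.inl ⟨k, h1, rfl, rfl⟩))))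
      · -- mu k = lam (k+1)
        rw [hφ0, hφ1]
        rcases le_total s (mu k) with hsk | hsk
        · -- nu k = mu k
          have h1 : nu k = mu k := by
            rw [hnu]
            exact max_eq_left (le_trans (min_le_right _ _) hsk)
          have h2 : nu k = lam ⟨(k : ℕ) + 1, hk1⟩ := h1.trans hk
          exact Relation.EqvGen.trans _ ((1 : Fin 3), k) _
            (Relation.EqvGen.symm _ _
              (Relation.EqvGen.rel _ _ (Or.inr (Or.inr (Or.inl ⟨k, h1, rfl, rfl⟩)))))
            (Relation.EqvGen.rel _ _ (Or.inr (Or.inl ⟨k, hk1, h2, rfl, rfl⟩)))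
        · -- nu (k+1) = lam (k+1)
          have h1 : nu ⟨(k : ℕ) + 1, hk1⟩ = lam ⟨(k : ℕ) + 1, hk1⟩ := by
            show max (mu ⟨(k : ℕ) + 1, hk1⟩) (min (lam ⟨(k : ℕ) + 1, hk1⟩) s)
              = lam ⟨(k : ℕ) + 1, hk1⟩
            rw [min_eq_left (by rw [← hk]; exact hsk)]
            exact max_eq_right (hml _)
          have h2 : mu k = nu ⟨(k : ℕ) + 1, hk1⟩ := by rw [h1, hk]
          exact Relation.EqvGen.trans _ ((1 : Fin 3), ⟨(k : ℕ) + 1, hk1⟩) _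
            (Relation.EqvGen.rel _ _ (Or.inr (Or.inr (Or.inr ⟨k, hk1, h2, rfl, rfl⟩))))
            (Relation.EqvGen.symm _ _
              (Relation.EqvGen.rel _ _ (Or.inl ⟨⟨(k : ℕ) + 1, hk1⟩, h1.symm, rfl, rfl⟩)))
    have := eqvgen_lift φ key hij
    rwa [hφ0, hφ1] at this
end

section
/- Suppose μ_i ≥ λ_{i+1} for all 1 ≤ i < n (the skew shape λ/μ is a disjoint union of rows), let N = |λ|−|μ| and consider weight 1 = (1,…,1) of length N, so m = N+1. Then the map sending a matrix x to the n×N matrix a with a_{i,j} = x^{j+1}_i − x^j_i (1 ≤ i ≤ n, 1 ≤ j ≤ N) is a bijection from the set of integral GT-patterns of shape λ/μ and weight 1 onto the set of n×N matrices of nonnegative integers whose i-th row sums to λ_i − μ_i for every i and whose j-th column sums to 1 for every j (contingency matrices with row sums λ_i − μ_i and all column sums 1). -/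
open Finset

lemma tele19 {N n : ℕ} (x : Fin (N + 1) → Fin n → ℝ) (i : Fin n) :
    ∀ jv (hj : jv < N + 1),
      x ⟨jv, hj⟩ i = x 0 i + ∑ k ∈ Finset.range jv,
        (if h : k < N then x (⟨k, h⟩ : Fin N).succ i - x (⟨k, h⟩ : Fin N).castSucc i else 0) := by
  intro jv
  induction jv with
  | zero => intro hj; simp
  | succ k ih =>
    intro hj
    have hkN : k < N := Nat.succ_lt_succ_iff.mp hj
    rw [Finset.sum_range_succ, dif_pos hkN, ← add_assoc, ← ih (Nat.lt_of_succ_lt hj)]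
    have h1 : (⟨k, hkN⟩ : Fin N).succ = ⟨k + 1, hj⟩ := rfl
    have h2 : (⟨k, hkN⟩ : Fin N).castSucc = ⟨k, Nat.lt_of_succ_lt hj⟩ := rfl
    rw [h1, h2]; ring

lemma finsum_eq_range19 {N : ℕ} (g : Fin N → ℝ) :
    ∑ j : Fin N, g j = ∑ k ∈ Finset.range N, (if h : k < N then g ⟨k, h⟩ else 0) := by
  rw [← Fin.sum_univ_eq_sum_range (fun k => if h : k < N then g ⟨k, h⟩ else 0) N]
  exact Finset.sum_congr rfl fun j _ => by simp [j.isLt]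

/-- When `λ/μ` is a disjoint union of rows and `N = |λ|-|μ|`, the map
`x ↦ (a_{i,j}) = (x^{j+1}_i - x^j_i)` is a bijection from the integral
GT-patterns of shape `λ/μ` and weight `1` onto the `n × N` contingency
matrices of nonnegative integers with row sums `λ_i - μ_i` and all column
sums `1`. -/
theorem statement19 (n : ℕ) (hn : 1 ≤ n) (lam mu : Fin n → ℤ)
    (hlam : Antitone lam) (hmu : Antitone mu)
    (hmu0 : ∀ j, 0 ≤ mu j) (hge : ∀ j, mu j ≤ lam j)
    (hdisj : ∀ i : Fin n, ∀ h : (i : ℕ) + 1 < n, lam ⟨(i : ℕ) + 1, h⟩ ≤ mu i)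
    (N : ℕ) (hN : (N : ℤ) = ∑ j, lam j - ∑ j, mu j) :
    Set.BijOn
      (fun (x : Fin (N + 1) → Fin n → ℝ) (i : Fin n) (j : Fin N) =>
        x j.succ i - x j.castSucc i)
      {x | x ∈ gtPolytope N n lam mu (fun _ => 1) ∧ ∀ i j, ∃ z : ℤ, x i j = (z : ℝ)}
      {a : Fin n → Fin N → ℝ |
        (∀ i j, ∃ z : ℤ, a i j = (z : ℝ)) ∧ (∀ i j, 0 ≤ a i j) ∧
        (∀ i, ∑ j, a i j = ((lam i : ℝ) - (mu i : ℝ))) ∧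
        ∀ j, ∑ i, a i j = 1} := by
  constructor
  · -- MapsTo
    rintro x ⟨⟨⟨hup, hdiag⟩, h0, hlast, hw⟩, hint⟩
    refine ⟨?_, ?_, ?_, ?_⟩
    · intro i j
      obtain ⟨z1, hz1⟩ := hint j.succ i
      obtain ⟨z2, hz2⟩ := hint j.castSucc i
      exact ⟨z1 - z2, by simp only []; rw [hz1, hz2]; push_cast; ring⟩
    · intro i j
      simpa using sub_nonneg.mpr (hup j i)
    · intro i
      have ht := tele19 x i N (Nat.lt_succ_self N)
      have hL : (⟨N, Nat.lt_succ_self N⟩ : Fin (N + 1)) = Fin.last N := rfl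
      rw [finsum_eq_range19 (fun j : Fin N => x j.succ i - x j.castSucc i)]
      rw [hL, hlast i, h0 i] at ht
      linarith
    · intro j
      have := hw j
      rw [← Finset.sum_sub_distrib] at this
      simpa using this
  constructor
  · -- InjOn
    rintro x ⟨⟨_, h0x, _, _⟩, _⟩ y ⟨⟨_, h0y, _, _⟩, _⟩ hxy
    funext j i
    obtain ⟨jv, hj⟩ := j
    rw [tele19 x i jv hj, tele19 y i jv hj, h0x i, h0y i]
    congr 1
    refine Finset.sum_congr rfl fun k _ => ?_
    split_ifs with h
    · exact congrFun (congrFun hxy i) ⟨k, h⟩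
    · rfl
  · -- SurjOn
    rintro a ⟨haint, hpos, hrow, hcol⟩
    set A : Fin n → ℕ → ℝ := fun i k => if h : k < N then a i ⟨k, h⟩ else 0 with hA
    set X : Fin (N + 1) → Fin n → ℝ :=
      fun j i => (mu i : ℝ) + ∑ k ∈ Finset.range (j : ℕ), A i k with hX
    have hA0 : ∀ i k, 0 ≤ A i k := by
      intro i k
      simp only [hA]
      split_ifs with h
      · exact hpos i ⟨k, h⟩
      · exact le_rfl
    have hdiff : ∀ (j : Fin N) (i : Fin n), X j.succ i - X j.castSucc i = a i j := by
      intro j i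
      simp only [hX, Fin.val_succ, Fin.coe_castSucc, Finset.sum_range_succ]
      have : A i (j : ℕ) = a i j := by simp [hA, j.isLt]
      rw [this]; ring
    have hX0 : ∀ i, X 0 i = (mu i : ℝ) := by intro i; simp [hX]
    have hXlast : ∀ i, X (Fin.last N) i = (lam i : ℝ) := by
      intro i
      simp only [hX, Fin.val_last]
      rw [← Fin.sum_univ_eq_sum_range (A i) N]
      have : ∑ k : Fin N, A i (k : ℕ) = ∑ k : Fin N, a i k :=
        Finset.sum_congr rfl fun k _ => by simp [hA, k.isLt]
      rw [this, hrow i]; ring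
    refine ⟨X, ⟨⟨⟨?_, ?_⟩, hX0, hXlast, ?_⟩, ?_⟩, ?_⟩
    · intro p q
      have := hdiff p q
      nlinarith [hpos q p]
    · intro p q h
      have h1 : X p.succ ⟨(q : ℕ) + 1, h⟩ ≤ (lam ⟨(q : ℕ) + 1, h⟩ : ℝ) := by
        rw [← hXlast ⟨(q : ℕ) + 1, h⟩]
        simp only [hX, Fin.val_last]
        refine add_le_add_right (Finset.sum_le_sum_of_subset_of_nonneg
          (Finset.range_subset_range.mpr p.succ.is_le) fun k _ _ => hA0 _ k) _
      have h2 : (mu q : ℝ) ≤ X p.castSucc q := by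
        simp only [hX]
        exact le_add_of_nonneg_right (Finset.sum_nonneg fun k _ => hA0 q k)
      have h3 : (lam ⟨(q : ℕ) + 1, h⟩ : ℝ) ≤ (mu q : ℝ) := by exact_mod_cast hdisj q h
      linarith
    · intro p
      rw [← Finset.sum_sub_distrib]
      rw [Finset.sum_congr rfl fun q _ => hdiff p q, hcol p]
      norm_num
    · intro j i
      choose za hza using haint
      refine ⟨mu i + ∑ k ∈ Finset.range (j : ℕ), (if h : k < N then za i ⟨k, h⟩ else 0), ?_⟩
      simp only [hX]
      push_cast
      congr 1
      refine Finset.sum_congr rfl fun k _ => ?_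
      simp only [hA]
      split_ifs with h
      · exact hza i ⟨k, h⟩
      · simp
    · funext i j
      exact hdiff j i
end
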